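/- arXiv:2306.15867 — 2 statements merged into one kernel-verified Lean document; each statement's English description precedes it below -/
import Mathlib

section
/- Let u have continuous partial derivatives up to order 1 on T. Then for every 𝐪 ∈ Q_k(T)²: −(Q₀u, ∇·𝐪)_T + ⟨Q_b u, 𝐪·𝐧⟩_{∂T} = (𝐐_N(∇u), 𝐪)_T, where 𝐐_N is the componentwise L²(T)-orthogonal projection onto Q_k(T)². (Equivalently, the discrete weak gradient of the projected triple (Q₀u, Q_b u, 𝐐_g(∇u)) equals 𝐐_N(∇u).) -/
open MeasureTheory Real

noncomputable section

/-- `Q_k`: real polynomials in two variables of degree at most `k` in each variable. -/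
def IsQk (k : ℕ) (v : ℝ → ℝ → ℝ) : Prop :=
  ∃ p : MvPolynomial (Fin 2) ℝ, (∀ i, p.degreeOf i ≤ k) ∧
    ∀ x y : ℝ, v x y = MvPolynomial.eval ![x, y] p

/-- `P_k`: real polynomials in one variable of degree at most `k`. -/
def IsPk (k : ℕ) (f : ℝ → ℝ) : Prop :=
  ∃ p : Polynomial ℝ, p.natDegree ≤ k ∧ ∀ x : ℝ, f x = p.eval x

/-- Partial derivative in the first variable. -/
def pd1 (w : ℝ → ℝ → ℝ) : ℝ → ℝ → ℝ := fun x y => deriv (fun t => w t y) x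

/-- Partial derivative in the second variable. -/
def pd2 (w : ℝ → ℝ → ℝ) : ℝ → ℝ → ℝ := fun x y => deriv (fun t => w x t) y

/-- Laplacian. -/
def lapl (w : ℝ → ℝ → ℝ) : ℝ → ℝ → ℝ :=
  fun x y => pd1 (pd1 w) x y + pd2 (pd2 w) x y

/-- L² inner product over the rectangle `[x0,x1] × [y0,y1]`. -/
def ipT (x0 x1 y0 y1 : ℝ) (f g : ℝ → ℝ → ℝ) : ℝ :=
  ∫ x in x0..x1, ∫ y in y0..y1, f x y * g x y

/-- Squared L² norm over the rectangle `[x0,x1] × [y0,y1]`. -/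
def normSqT (x0 x1 y0 y1 : ℝ) (w : ℝ → ℝ → ℝ) : ℝ := ipT x0 x1 y0 y1 w w

/-- Squared L² norm over the two edges parallel to the x-axis (`∂T₁`). -/
def normSqE1 (x0 x1 y0 y1 : ℝ) (w : ℝ → ℝ → ℝ) : ℝ :=
  ∫ x in x0..x1, ((w x y0) ^ 2 + (w x y1) ^ 2)

/-- Squared L² norm over the two edges parallel to the y-axis (`∂T₂`). -/
def normSqE2 (x0 x1 y0 y1 : ℝ) (w : ℝ → ℝ → ℝ) : ℝ :=
  ∫ y in y0..y1, ((w x0 y) ^ 2 + (w x1 y) ^ 2)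

/-- `P` is the L²(T)-orthogonal projection of `φ` onto `Q_k(T)`. -/
def IsProjT (k : ℕ) (x0 x1 y0 y1 : ℝ) (φ P : ℝ → ℝ → ℝ) : Prop :=
  IsQk k P ∧ ∀ q : ℝ → ℝ → ℝ, IsQk k q →
    ipT x0 x1 y0 y1 (fun x y => φ x y - P x y) q = 0

/-- `g` is the L²(e)-orthogonal projection of `f` onto `P_k(e)`, for an edge
parametrized by `[a,b]`. -/
def IsProjE (k : ℕ) (a b : ℝ) (f g : ℝ → ℝ) : Prop :=
  IsPk k g ∧ ∀ q : ℝ → ℝ, IsPk k q → (∫ x in a..b, (f x - g x) * q x) = 0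

open Finset

lemma fin2_finsupp_eq (d : Fin 2 →₀ ℕ) :
    d = Finsupp.single 0 (d 0) + Finsupp.single 1 (d 1) := by
  ext i
  fin_cases i <;> simp

lemma isQk_sum {k : ℕ} {v : ℝ → ℝ → ℝ} (hv : IsQk k v) :
    ∃ c : ℕ → ℕ → ℝ, (∀ i j, k < i ∨ k < j → c i j = 0) ∧
      ∀ x y, v x y = ∑ i ∈ range (k+1), ∑ j ∈ range (k+1), c i j * x^i * y^j := by
  obtain ⟨p, hdeg, hev⟩ := hv
  refine ⟨fun i j => p.coeff (Finsupp.single 0 i + Finsupp.single 1 j), ?_, ?_⟩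
  · intro i j hki
    rw [← MvPolynomial.notMem_support_iff]
    intro hm
    have h0 := (MvPolynomial.degreeOf_le_iff.mp (hdeg 0)) _ hm
    have h1 := (MvPolynomial.degreeOf_le_iff.mp (hdeg 1)) _ hm
    simp at h0 h1
    omega
  · intro x y
    set g : ℕ × ℕ → (Fin 2 →₀ ℕ) := fun ij => Finsupp.single 0 ij.1 + Finsupp.single 1 ij.2 with hg
    have hgapp : ∀ ij : ℕ × ℕ, (g ij) 0 = ij.1 ∧ (g ij) 1 = ij.2 := by
      intro ij; constructor <;> simp [hg, Finsupp.single_apply]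
    set S : Finset (Fin 2 →₀ ℕ) := (range (k+1) ×ˢ range (k+1)).image g with hS
    have hsub : p.support ⊆ S := by
      intro m hm
      refine Finset.mem_image.mpr ⟨(m 0, m 1), ?_, (fin2_finsupp_eq m).symm⟩
      simp only [Finset.mem_product, Finset.mem_range]
      exact ⟨Nat.lt_succ_of_le ((MvPolynomial.degreeOf_le_iff.mp (hdeg 0)) _ hm),
        Nat.lt_succ_of_le ((MvPolynomial.degreeOf_le_iff.mp (hdeg 1)) _ hm)⟩
    have hinj : Set.InjOn g ↑(range (k+1) ×ˢ range (k+1)) := by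
      intro a _ b _ hab
      have h0 := congrArg (fun f => f 0) hab
      have h1 := congrArg (fun f => f 1) hab
      simp only [(hgapp a).1, (hgapp a).2, (hgapp b).1, (hgapp b).2] at h0 h1
      exact Prod.ext h0 h1
    rw [hev, MvPolynomial.eval_eq']
    have h1 : ∑ m ∈ p.support, p.coeff m * ∏ i : Fin 2, ![x, y] i ^ m i
        = ∑ m ∈ S, p.coeff m * ∏ i : Fin 2, ![x, y] i ^ m i := by
      refine Finset.sum_subset hsub ?_
      intro m _ hm
      rw [MvPolynomial.notMem_support_iff] at hm
      simp [hm]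
    rw [h1, hS, Finset.sum_image hinj, Finset.sum_product]
    apply Finset.sum_congr rfl; intro i _
    apply Finset.sum_congr rfl; intro j _
    rw [Fin.prod_univ_two]
    simp only [(hgapp (i,j)).1, (hgapp (i,j)).2]
    simp [mul_assoc, hg]

lemma sum_isQk {k : ℕ} (c : ℕ → ℕ → ℝ) :
    IsQk k (fun x y => ∑ i ∈ range (k+1), ∑ j ∈ range (k+1), c i j * x^i * y^j) := by
  refine ⟨∑ i ∈ range (k+1), ∑ j ∈ range (k+1),
    MvPolynomial.monomial (Finsupp.single 0 i + Finsupp.single 1 j) (c i j), ?_, ?_⟩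
  · intro l
    apply MvPolynomial.degreeOf_le_iff.mpr
    intro m hm
    obtain ⟨i, hi, hm⟩ := Finset.mem_biUnion.mp (MvPolynomial.support_sum hm)
    obtain ⟨j, hj, hm⟩ := Finset.mem_biUnion.mp (MvPolynomial.support_sum hm)
    have hm' := MvPolynomial.support_monomial_subset hm
    rw [Finset.mem_singleton] at hm'
    subst hm'
    rw [Finset.mem_range] at hi hj
    fin_cases l <;>
      simp [Finsupp.single_apply] <;>
      omega
  · intro x y
    simp only [map_sum, MvPolynomial.eval_monomial]
    apply Finset.sum_congr rfl; intro i hi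
    apply Finset.sum_congr rfl; intro j hj
    rw [Finsupp.prod_add_index' (fun a => pow_zero _) (fun a b1 b2 => pow_add _ _ _),
      Finsupp.prod_single_index, Finsupp.prod_single_index]
    · simp [mul_assoc]
    · exact pow_zero _
    · exact pow_zero _

lemma sum_isPk1 {k : ℕ} (c : ℕ → ℕ → ℝ) (y : ℝ) :
    IsPk k (fun x => ∑ i ∈ range (k+1), ∑ j ∈ range (k+1), c i j * x^i * y^j) := by
  refine ⟨∑ i ∈ range (k+1), Polynomial.C (∑ j ∈ range (k+1), c i j * y^j) * Polynomial.X^i, ?_, ?_⟩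
  · apply Polynomial.natDegree_sum_le_of_forall_le
    intro i hi
    apply le_trans (Polynomial.natDegree_C_mul_le _ _)
    rw [Polynomial.natDegree_X_pow]
    exact Nat.lt_succ_iff.mp (Finset.mem_range.mp hi)
  · intro x
    simp [Polynomial.eval_finset_sum, Finset.mul_sum, Finset.sum_mul]
    apply Finset.sum_congr rfl; intro i hi
    apply Finset.sum_congr rfl; intro j hj
    ring

lemma sum_isPk2 {k : ℕ} (c : ℕ → ℕ → ℝ) (x : ℝ) :
    IsPk k (fun y => ∑ i ∈ range (k+1), ∑ j ∈ range (k+1), c i j * x^i * y^j) := by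
  refine ⟨∑ j ∈ range (k+1), Polynomial.C (∑ i ∈ range (k+1), c i j * x^i) * Polynomial.X^j, ?_, ?_⟩
  · apply Polynomial.natDegree_sum_le_of_forall_le
    intro i hi
    apply le_trans (Polynomial.natDegree_C_mul_le _ _)
    rw [Polynomial.natDegree_X_pow]
    exact Nat.lt_succ_iff.mp (Finset.mem_range.mp hi)
  · intro y
    simp only [Polynomial.eval_finset_sum, Polynomial.eval_mul, Polynomial.eval_C,
      Polynomial.eval_pow, Polynomial.eval_X, Finset.sum_mul]
    rw [Finset.sum_comm]

lemma isPk_continuous {k : ℕ} {f : ℝ → ℝ} (hf : IsPk k f) : Continuous f := by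
  obtain ⟨p, _, hev⟩ := hf
  have : f = fun x => p.eval x := funext hev
  rw [this]
  exact p.continuous

lemma sum_hasDerivAt1 {k : ℕ} (c : ℕ → ℕ → ℝ) (hc : ∀ i j, k < i → c i j = 0) (x y : ℝ) :
    HasDerivAt (fun t => ∑ i ∈ range (k+1), ∑ j ∈ range (k+1), c i j * t^i * y^j)
      (∑ i ∈ range (k+1), ∑ j ∈ range (k+1), ((i:ℝ)+1) * c (i+1) j * x^i * y^j) x := by
  have h : HasDerivAt (fun t => ∑ i ∈ range (k+1), ∑ j ∈ range (k+1), c i j * t^i * y^j)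
      (∑ i ∈ range (k+1), ∑ j ∈ range (k+1), c i j * ((i:ℝ) * x^(i-1)) * y^j) x := by
    apply HasDerivAt.fun_sum
    intro i _
    apply HasDerivAt.fun_sum
    intro j _
    exact (((hasDerivAt_pow i x).const_mul (c i j)).mul_const (y^j))
  convert h using 1
  conv_lhs => rw [Finset.sum_range_succ]
  conv_rhs => rw [Finset.sum_range_succ']
  have hk : ∑ j ∈ range (k+1), ((k:ℝ)+1) * c (k+1) j * x^k * y^j = 0 := by
    apply Finset.sum_eq_zero; intro j _; rw [hc (k+1) j (Nat.lt_succ_self k)]; ring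
  rw [hk]
  simp only [Nat.cast_zero, zero_mul, mul_zero, Finset.sum_const_zero, add_zero]
  apply Finset.sum_congr rfl; intro i _
  apply Finset.sum_congr rfl; intro j _
  rw [Nat.add_sub_cancel]
  push_cast
  ring

lemma sum_hasDerivAt2 {k : ℕ} (c : ℕ → ℕ → ℝ) (hc : ∀ i j, k < j → c i j = 0) (x y : ℝ) :
    HasDerivAt (fun t => ∑ i ∈ range (k+1), ∑ j ∈ range (k+1), c i j * x^i * t^j)
      (∑ i ∈ range (k+1), ∑ j ∈ range (k+1), ((j:ℝ)+1) * c i (j+1) * x^i * y^j) y := by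
  have h : HasDerivAt (fun t => ∑ i ∈ range (k+1), ∑ j ∈ range (k+1), c i j * x^i * t^j)
      (∑ i ∈ range (k+1), ∑ j ∈ range (k+1), c i j * x^i * ((j:ℝ) * y^(j-1))) y := by
    apply HasDerivAt.fun_sum
    intro i _
    apply HasDerivAt.fun_sum
    intro j _
    exact ((hasDerivAt_pow j y).const_mul (c i j * x^i))
  convert h using 1
  apply Finset.sum_congr rfl; intro i _
  conv_lhs => rw [Finset.sum_range_succ]
  conv_rhs => rw [Finset.sum_range_succ']
  have hk : ((k:ℝ)+1) * c i (k+1) * x^i * y^k = 0 := by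
    rw [hc i (k+1) (Nat.lt_succ_self k)]; ring
  rw [hk]
  simp only [Nat.cast_zero, zero_mul, mul_zero, Finset.sum_const_zero, add_zero]
  apply Finset.sum_congr rfl; intro j _
  rw [Nat.add_sub_cancel]
  push_cast
  ring

lemma isQk_pd1 {k : ℕ} {v : ℝ → ℝ → ℝ} (hv : IsQk k v) :
    IsQk k (pd1 v) ∧ ∀ x y, HasDerivAt (fun t => v t y) (pd1 v x y) x := by
  obtain ⟨c, hc, hrep⟩ := isQk_sum hv
  have hd : ∀ x y, HasDerivAt (fun t => v t y)
      (∑ i ∈ range (k+1), ∑ j ∈ range (k+1), ((i:ℝ)+1) * c (i+1) j * x^i * y^j) x := by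
    intro x y
    have : (fun t => v t y) = fun t => ∑ i ∈ range (k+1), ∑ j ∈ range (k+1), c i j * t^i * y^j :=
      funext fun t => hrep t y
    rw [this]
    exact sum_hasDerivAt1 c (fun i j h => hc i j (Or.inl h)) x y
  have hpd : ∀ x y, pd1 v x y
      = ∑ i ∈ range (k+1), ∑ j ∈ range (k+1), ((i:ℝ)+1) * c (i+1) j * x^i * y^j := by
    intro x y
    exact (hd x y).deriv
  constructor
  · have : pd1 v = fun x y => ∑ i ∈ range (k+1), ∑ j ∈ range (k+1),
        ((i:ℝ)+1) * c (i+1) j * x^i * y^j := funext fun x => funext fun y => hpd x y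
    rw [this]
    exact sum_isQk _
  · intro x y
    rw [hpd x y]
    exact hd x y

lemma isQk_pd2 {k : ℕ} {v : ℝ → ℝ → ℝ} (hv : IsQk k v) :
    IsQk k (pd2 v) ∧ ∀ x y, HasDerivAt (fun t => v x t) (pd2 v x y) y := by
  obtain ⟨c, hc, hrep⟩ := isQk_sum hv
  have hd : ∀ x y, HasDerivAt (fun t => v x t)
      (∑ i ∈ range (k+1), ∑ j ∈ range (k+1), ((j:ℝ)+1) * c i (j+1) * x^i * y^j) y := by
    intro x y
    have : (fun t => v x t) = fun t => ∑ i ∈ range (k+1), ∑ j ∈ range (k+1), c i j * x^i * t^j :=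
      funext fun t => hrep x t
    rw [this]
    exact sum_hasDerivAt2 c (fun i j h => hc i j (Or.inr h)) x y
  have hpd : ∀ x y, pd2 v x y
      = ∑ i ∈ range (k+1), ∑ j ∈ range (k+1), ((j:ℝ)+1) * c i (j+1) * x^i * y^j := by
    intro x y
    exact (hd x y).deriv
  constructor
  · have : pd2 v = fun x y => ∑ i ∈ range (k+1), ∑ j ∈ range (k+1),
        ((j:ℝ)+1) * c i (j+1) * x^i * y^j := funext fun x => funext fun y => hpd x y
    rw [this]
    exact sum_isQk _
  · intro x y
    rw [hpd x y]
    exact hd x y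

lemma isQk_add {k : ℕ} {v w : ℝ → ℝ → ℝ} (hv : IsQk k v) (hw : IsQk k w) :
    IsQk k (fun x y => v x y + w x y) := by
  obtain ⟨c, _, hcr⟩ := isQk_sum hv
  obtain ⟨d, _, hdr⟩ := isQk_sum hw
  have : (fun x y => v x y + w x y) = fun x y => ∑ i ∈ range (k+1), ∑ j ∈ range (k+1),
      (c i j + d i j) * x^i * y^j := by
    funext x y
    rw [hcr, hdr, ← Finset.sum_add_distrib]
    apply Finset.sum_congr rfl; intro i _
    rw [← Finset.sum_add_distrib]
    apply Finset.sum_congr rfl; intro j _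
    ring
  rw [this]
  exact sum_isQk _

lemma isQk_continuous {k : ℕ} {v : ℝ → ℝ → ℝ} (hv : IsQk k v) :
    Continuous fun p : ℝ × ℝ => v p.1 p.2 := by
  obtain ⟨c, _, hrep⟩ := isQk_sum hv
  have : (fun p : ℝ × ℝ => v p.1 p.2) = fun p : ℝ × ℝ =>
      ∑ i ∈ range (k+1), ∑ j ∈ range (k+1), c i j * p.1^i * p.2^j := by
    funext p; exact hrep p.1 p.2
  rw [this]
  apply continuous_finset_sum
  intro i _
  apply continuous_finset_sum
  intro j _
  fun_prop

lemma isQk_slice1 {k : ℕ} {v : ℝ → ℝ → ℝ} (hv : IsQk k v) (y : ℝ) :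
    IsPk k (fun x => v x y) := by
  obtain ⟨c, _, hrep⟩ := isQk_sum hv
  have : (fun x => v x y) = fun x => ∑ i ∈ range (k+1), ∑ j ∈ range (k+1), c i j * x^i * y^j :=
    funext fun x => hrep x y
  rw [this]
  exact sum_isPk1 c y

lemma isQk_slice2 {k : ℕ} {v : ℝ → ℝ → ℝ} (hv : IsQk k v) (x : ℝ) :
    IsPk k (fun y => v x y) := by
  obtain ⟨c, _, hrep⟩ := isQk_sum hv
  have : (fun y => v x y) = fun y => ∑ i ∈ range (k+1), ∑ j ∈ range (k+1), c i j * x^i * y^j :=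
    funext fun y => hrep x y
  rw [this]
  exact sum_isPk2 c x

lemma contParam1 {F : ℝ → ℝ → ℝ} (hF : Continuous fun p : ℝ × ℝ => F p.1 p.2) (y0 y1 : ℝ) :
    Continuous fun x => ∫ y in y0..y1, F x y :=
  intervalIntegral.continuous_parametric_intervalIntegral_of_continuous' (f := F) (μ := volume)
    hF y0 y1

lemma contParam2 {F : ℝ → ℝ → ℝ} (hF : Continuous fun p : ℝ × ℝ => F p.1 p.2) (x0 x1 : ℝ) :
    Continuous fun y => ∫ x in x0..x1, F x y :=
  intervalIntegral.continuous_parametric_intervalIntegral_of_continuous'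
    (f := fun y x => F x y) (μ := volume) (hF.comp continuous_swap) x0 x1

lemma contSlice1 {F : ℝ → ℝ → ℝ} (hF : Continuous fun p : ℝ × ℝ => F p.1 p.2) (x : ℝ) :
    Continuous fun y => F x y := hF.comp (Continuous.prodMk_right x)

lemma contSlice2 {F : ℝ → ℝ → ℝ} (hF : Continuous fun p : ℝ × ℝ => F p.1 p.2) (y : ℝ) :
    Continuous fun x => F x y := hF.comp (continuous_id.prodMk continuous_const)

lemma swapII {x0 x1 y0 y1 : ℝ} (hx : x0 ≤ x1) (hy : y0 ≤ y1) {F : ℝ → ℝ → ℝ}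
    (hF : Continuous fun p : ℝ × ℝ => F p.1 p.2) :
    ∫ x in x0..x1, ∫ y in y0..y1, F x y = ∫ y in y0..y1, ∫ x in x0..x1, F x y := by
  have h1 : IntegrableOn (Function.uncurry F) (Set.Icc x0 x1 ×ˢ Set.Icc y0 y1)
      ((volume : Measure ℝ).prod volume) :=
    (show Continuous (Function.uncurry F) from hF).continuousOn.integrableOn_compact
      (isCompact_Icc.prod isCompact_Icc)
  have hi : Integrable (Function.uncurry F)
      ((volume.restrict (Set.Ioc x0 x1)).prod (volume.restrict (Set.Ioc y0 y1))) := by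
    rw [Measure.prod_restrict]
    exact h1.mono_set (Set.prod_mono Set.Ioc_subset_Icc_self Set.Ioc_subset_Icc_self)
  simp only [intervalIntegral.integral_of_le hx, intervalIntegral.integral_of_le hy]
  exact MeasureTheory.integral_integral_swap hi

lemma iint_sub {F G : ℝ → ℝ → ℝ} (hF : Continuous fun p : ℝ × ℝ => F p.1 p.2)
    (hG : Continuous fun p : ℝ × ℝ => G p.1 p.2) (x0 x1 y0 y1 : ℝ) :
    ∫ x in x0..x1, ∫ y in y0..y1, (F x y - G x y)
      = (∫ x in x0..x1, ∫ y in y0..y1, F x y) - ∫ x in x0..x1, ∫ y in y0..y1, G x y := by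
  have h1 : ∀ x, (∫ y in y0..y1, (F x y - G x y))
      = (∫ y in y0..y1, F x y) - ∫ y in y0..y1, G x y := fun x =>
    intervalIntegral.integral_sub ((contSlice1 hF x).intervalIntegrable _ _)
      ((contSlice1 hG x).intervalIntegrable _ _)
  simp_rw [h1]
  exact intervalIntegral.integral_sub ((contParam1 hF _ _).intervalIntegrable _ _)
    ((contParam1 hG _ _).intervalIntegrable _ _)

lemma iint_add {F G : ℝ → ℝ → ℝ} (hF : Continuous fun p : ℝ × ℝ => F p.1 p.2)
    (hG : Continuous fun p : ℝ × ℝ => G p.1 p.2) (x0 x1 y0 y1 : ℝ) :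
    ∫ x in x0..x1, ∫ y in y0..y1, (F x y + G x y)
      = (∫ x in x0..x1, ∫ y in y0..y1, F x y) + ∫ x in x0..x1, ∫ y in y0..y1, G x y := by
  have h1 : ∀ x, (∫ y in y0..y1, (F x y + G x y))
      = (∫ y in y0..y1, F x y) + ∫ y in y0..y1, G x y := fun x =>
    intervalIntegral.integral_add ((contSlice1 hF x).intervalIntegrable _ _)
      ((contSlice1 hG x).intervalIntegrable _ _)
  simp_rw [h1]
  exact intervalIntegral.integral_add ((contParam1 hF _ _).intervalIntegrable _ _)
    ((contParam1 hG _ _).intervalIntegrable _ _)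

lemma u_pd1 {u : ℝ → ℝ → ℝ} (hu : ContDiff ℝ 1 fun p : ℝ × ℝ => u p.1 p.2) :
    (∀ x y, HasDerivAt (fun t => u t y) (pd1 u x y) x)
      ∧ Continuous fun p : ℝ × ℝ => pd1 u p.1 p.2 := by
  set U : ℝ × ℝ → ℝ := fun p => u p.1 p.2 with hU
  have hd : ∀ x y, HasDerivAt (fun t => u t y) ((fderiv ℝ U (x, y)) (1, 0)) x := by
    intro x y
    have h1 : HasDerivAt (fun t : ℝ => ((t, y) : ℝ × ℝ)) ((1 : ℝ), (0 : ℝ)) x :=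
      (hasDerivAt_id x).prodMk (hasDerivAt_const x y)
    exact ((hu.differentiable one_ne_zero (x, y)).hasFDerivAt).comp_hasDerivAt x h1
  have hpd : ∀ x y, pd1 u x y = (fderiv ℝ U (x, y)) (1, 0) := fun x y => (hd x y).deriv
  constructor
  · intro x y
    rw [hpd x y]
    exact hd x y
  · have : (fun p : ℝ × ℝ => pd1 u p.1 p.2) = fun p => (fderiv ℝ U p) (1, 0) := by
      funext p
      exact hpd p.1 p.2
    rw [this]
    exact (hu.continuous_fderiv one_ne_zero).clm_apply continuous_const

lemma u_pd2 {u : ℝ → ℝ → ℝ} (hu : ContDiff ℝ 1 fun p : ℝ × ℝ => u p.1 p.2) :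
    (∀ x y, HasDerivAt (fun t => u x t) (pd2 u x y) y)
      ∧ Continuous fun p : ℝ × ℝ => pd2 u p.1 p.2 := by
  set U : ℝ × ℝ → ℝ := fun p => u p.1 p.2 with hU
  have hd : ∀ x y, HasDerivAt (fun t => u x t) ((fderiv ℝ U (x, y)) (0, 1)) y := by
    intro x y
    have h1 : HasDerivAt (fun t : ℝ => ((x, t) : ℝ × ℝ)) ((0 : ℝ), (1 : ℝ)) y :=
      (hasDerivAt_const y x).prodMk (hasDerivAt_id y)
    exact ((hu.differentiable one_ne_zero (x, y)).hasFDerivAt).comp_hasDerivAt y h1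
  have hpd : ∀ x y, pd2 u x y = (fderiv ℝ U (x, y)) (0, 1) := fun x y => (hd x y).deriv
  constructor
  · intro x y
    rw [hpd x y]
    exact hd x y
  · have : (fun p : ℝ × ℝ => pd2 u p.1 p.2) = fun p => (fderiv ℝ U p) (0, 1) := by
      funext p
      exact hpd p.1 p.2
    rw [this]
    exact (hu.continuous_fderiv one_ne_zero).clm_apply continuous_const

/-- the discrete weak gradient of the projected triple
`(Q₀u, Q_b u, 𝐐_g(∇u))` is `𝐐_N(∇u)`, expressed through the defining identity.
The rectangle is `T = [x0,x1] × [y0,y1]`; `(q1, q2) ∈ Q_k(T)²` and on each edge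
the outward normal is used. -/
theorem statement6 (k : ℕ) (hk : 3 ≤ k) (x0 x1 y0 y1 : ℝ) (hx : x0 < x1) (hy : y0 < y1)
    (u : ℝ → ℝ → ℝ) (hu : ContDiff ℝ 1 (fun p : ℝ × ℝ => u p.1 p.2))
    (P0u P1 P2 : ℝ → ℝ → ℝ)
    (hP0u : IsProjT k x0 x1 y0 y1 u P0u)
    (hP1 : IsProjT k x0 x1 y0 y1 (pd1 u) P1)
    (hP2 : IsProjT k x0 x1 y0 y1 (pd2 u) P2)
    (qbB qbT qbL qbR : ℝ → ℝ)
    (hqbB : IsProjE k x0 x1 (fun x => u x y0) qbB)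
    (hqbT : IsProjE k x0 x1 (fun x => u x y1) qbT)
    (hqbL : IsProjE k y0 y1 (fun y => u x0 y) qbL)
    (hqbR : IsProjE k y0 y1 (fun y => u x1 y) qbR)
    (q1 q2 : ℝ → ℝ → ℝ) (hq1 : IsQk k q1) (hq2 : IsQk k q2) :
    -(ipT x0 x1 y0 y1 P0u (fun x y => pd1 q1 x y + pd2 q2 x y))
      + ((∫ x in x0..x1, qbB x * (-(q2 x y0)))
        + (∫ x in x0..x1, qbT x * q2 x y1)
        + (∫ y in y0..y1, qbL y * (-(q1 x0 y)))
        + (∫ y in y0..y1, qbR y * q1 x1 y))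
    = ipT x0 x1 y0 y1 P1 q1 + ipT x0 x1 y0 y1 P2 q2 := by
  have hUc : Continuous fun p : ℝ × ℝ => u p.1 p.2 := hu.continuous
  have hq1c := isQk_continuous hq1
  have hq2c := isQk_continuous hq2
  have hpq1 := isQk_pd1 hq1
  have hpq2 := isQk_pd2 hq2
  have hpq1c := isQk_continuous hpq1.1
  have hpq2c := isQk_continuous hpq2.1
  have hud1 := u_pd1 hu
  have hud2 := u_pd2 hu
  have hP0uc := isQk_continuous hP0u.1
  have hP1c := isQk_continuous hP1.1
  have hP2c := isQk_continuous hP2.1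
  -- Step 1+2: replace P0u by u and split
  have E1 : ipT x0 x1 y0 y1 P0u (fun x y => pd1 q1 x y + pd2 q2 x y)
      = (∫ x in x0..x1, ∫ y in y0..y1, u x y * pd1 q1 x y)
        + ∫ x in x0..x1, ∫ y in y0..y1, u x y * pd2 q2 x y := by
    have hD : IsQk k (fun x y => pd1 q1 x y + pd2 q2 x y) := isQk_add hpq1.1 hpq2.1
    have hDc : Continuous fun p : ℝ × ℝ => pd1 q1 p.1 p.2 + pd2 q2 p.1 p.2 :=
      hpq1c.add hpq2c
    have h0 := hP0u.2 _ hD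
    simp only [ipT] at h0 ⊢
    simp_rw [sub_mul] at h0
    rw [iint_sub (hUc.mul hDc) (hP0uc.mul hDc), sub_eq_zero] at h0
    rw [← h0]
    simp_rw [mul_add]
    exact iint_add (hUc.mul hpq1c) (hUc.mul hpq2c) x0 x1 y0 y1
  -- Step 3: integration by parts in y
  have E3 : (∫ x in x0..x1, ∫ y in y0..y1, u x y * pd2 q2 x y)
      = (∫ x in x0..x1, u x y1 * q2 x y1) - (∫ x in x0..x1, u x y0 * q2 x y0)
        - ∫ x in x0..x1, ∫ y in y0..y1, pd2 u x y * q2 x y := by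
    have inner : ∀ x, (∫ y in y0..y1, u x y * pd2 q2 x y)
        = u x y1 * q2 x y1 - u x y0 * q2 x y0 - ∫ y in y0..y1, pd2 u x y * q2 x y := by
      intro x
      apply intervalIntegral.integral_mul_deriv_eq_deriv_mul
      · intro t _; exact hud2.1 x t
      · intro t _; exact hpq2.2 x t
      · exact (contSlice1 hud2.2 x).intervalIntegrable _ _
      · exact (contSlice1 hpq2c x).intervalIntegrable _ _
    simp_rw [inner]
    rw [intervalIntegral.integral_sub, intervalIntegral.integral_sub]
    · exact ((contSlice2 hUc y1).mul (contSlice2 hq2c y1)).intervalIntegrable _ _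
    · exact ((contSlice2 hUc y0).mul (contSlice2 hq2c y0)).intervalIntegrable _ _
    · exact (((contSlice2 hUc y1).mul (contSlice2 hq2c y1)).sub
        ((contSlice2 hUc y0).mul (contSlice2 hq2c y0))).intervalIntegrable _ _
    · exact (contParam1 (hud2.2.mul hq2c) y0 y1).intervalIntegrable _ _
  -- Step 4: integration by parts in x
  have E4 : (∫ x in x0..x1, ∫ y in y0..y1, u x y * pd1 q1 x y)
      = (∫ y in y0..y1, u x1 y * q1 x1 y) - (∫ y in y0..y1, u x0 y * q1 x0 y)
        - ∫ x in x0..x1, ∫ y in y0..y1, pd1 u x y * q1 x y := by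
    rw [swapII hx.le hy.le (hUc.mul hpq1c)]
    have inner : ∀ y, (∫ x in x0..x1, u x y * pd1 q1 x y)
        = u x1 y * q1 x1 y - u x0 y * q1 x0 y - ∫ x in x0..x1, pd1 u x y * q1 x y := by
      intro y
      apply intervalIntegral.integral_mul_deriv_eq_deriv_mul
      · intro t _; exact hud1.1 t y
      · intro t _; exact hpq1.2 t y
      · exact (contSlice2 hud1.2 y).intervalIntegrable _ _
      · exact (contSlice2 hpq1c y).intervalIntegrable _ _
    simp_rw [inner]
    rw [intervalIntegral.integral_sub, intervalIntegral.integral_sub,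
      ← swapII hx.le hy.le (hud1.2.mul hq1c)]
    · exact ((contSlice1 hUc x1).mul (contSlice1 hq1c x1)).intervalIntegrable _ _
    · exact ((contSlice1 hUc x0).mul (contSlice1 hq1c x0)).intervalIntegrable _ _
    · exact (((contSlice1 hUc x1).mul (contSlice1 hq1c x1)).sub
        ((contSlice1 hUc x0).mul (contSlice1 hq1c x0))).intervalIntegrable _ _
    · exact (contParam2 (hud1.2.mul hq1c) x0 x1).intervalIntegrable _ _
  -- Step 5: right-hand side projections
  have E5 : ipT x0 x1 y0 y1 P1 q1
      = ∫ x in x0..x1, ∫ y in y0..y1, pd1 u x y * q1 x y := by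
    have h0 := hP1.2 q1 hq1
    simp only [ipT] at h0 ⊢
    simp_rw [sub_mul] at h0
    rw [iint_sub (hud1.2.mul hq1c) (hP1c.mul hq1c), sub_eq_zero] at h0
    exact h0.symm
  have E6 : ipT x0 x1 y0 y1 P2 q2
      = ∫ x in x0..x1, ∫ y in y0..y1, pd2 u x y * q2 x y := by
    have h0 := hP2.2 q2 hq2
    simp only [ipT] at h0 ⊢
    simp_rw [sub_mul] at h0
    rw [iint_sub (hud2.2.mul hq2c) (hP2c.mul hq2c), sub_eq_zero] at h0
    exact h0.symm
  -- Step 6: boundary projections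
  have hBproj : ∀ (y' : ℝ) (qq : ℝ → ℝ) (hqq : IsProjE k x0 x1 (fun x => u x y') qq),
      (∫ x in x0..x1, qq x * q2 x y') = ∫ x in x0..x1, u x y' * q2 x y' := by
    intro y' qq hqq
    have h := hqq.2 _ (isQk_slice1 hq2 y')
    simp_rw [sub_mul] at h
    rw [intervalIntegral.integral_sub (f := fun x => u x y' * q2 x y') (g := fun x => qq x * q2 x y')
      (((contSlice2 hUc y').mul (contSlice2 hq2c y')).intervalIntegrable _ _)
      (((isPk_continuous hqq.1).mul (contSlice2 hq2c y')).intervalIntegrable _ _),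
      sub_eq_zero] at h
    exact h.symm
  have hLproj : ∀ (x' : ℝ) (qq : ℝ → ℝ) (hqq : IsProjE k y0 y1 (fun y => u x' y) qq),
      (∫ y in y0..y1, qq y * q1 x' y) = ∫ y in y0..y1, u x' y * q1 x' y := by
    intro x' qq hqq
    have h := hqq.2 _ (isQk_slice2 hq1 x')
    simp_rw [sub_mul] at h
    rw [intervalIntegral.integral_sub (f := fun y => u x' y * q1 x' y) (g := fun y => qq y * q1 x' y)
      (((contSlice1 hUc x').mul (contSlice1 hq1c x')).intervalIntegrable _ _)
      (((isPk_continuous hqq.1).mul (contSlice1 hq1c x')).intervalIntegrable _ _),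
      sub_eq_zero] at h
    exact h.symm
  have EB : (∫ x in x0..x1, qbB x * (-(q2 x y0))) = -∫ x in x0..x1, u x y0 * q2 x y0 := by
    simp_rw [mul_neg]
    rw [intervalIntegral.integral_neg, hBproj y0 qbB hqbB]
  have ET : (∫ x in x0..x1, qbT x * q2 x y1) = ∫ x in x0..x1, u x y1 * q2 x y1 :=
    hBproj y1 qbT hqbT
  have EL : (∫ y in y0..y1, qbL y * (-(q1 x0 y))) = -∫ y in y0..y1, u x0 y * q1 x0 y := by
    simp_rw [mul_neg]
    rw [intervalIntegral.integral_neg, hLproj x0 qbL hqbL]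
  have ER : (∫ y in y0..y1, qbR y * q1 x1 y) = ∫ y in y0..y1, u x1 y * q1 x1 y :=
    hLproj x1 qbR hqbR
  rw [E1, E3, E4, E5, E6, EB, ET, EL, ER]
  ring
end
end

section
/- The map v ↦ |||v||| defines a norm on the finite-dimensional space V_N⁰; in particular, if v = (v₀, v_b, 𝐯_g) ∈ V_N⁰ satisfies |||v||| = 0, then v₀ = 0 on every element of 𝒯_N, v_b = 0 on every edge, and 𝐯_g = 0 on every edge. -/
open MeasureTheory Real

noncomputable section

/-- Mixed partial derivative `∂₁^i ∂₂^j`. -/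
def pdM (i j : ℕ) (w : ℝ → ℝ → ℝ) : ℝ → ℝ → ℝ := pd1^[i] (pd2^[j] w)

/-- The 1D Shishkin mesh points on `[0,1]` with transition parameter `lam`:
`[0,lam]` is divided into `N/4` equal subintervals, `[lam, 1-lam]` into `N/2`,
and `[1-lam, 1]` into `N/4`. -/
def meshPt (N : ℕ) (lam : ℝ) (i : ℕ) : ℝ :=
  if i ≤ N / 4 then (i : ℝ) * (4 * lam / N)
  else if i ≤ 3 * (N / 4) then lam + ((i : ℝ) - (↑(N / 4) : ℝ)) * (2 * (1 - 2 * lam) / N)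
  else 1 - lam + ((i : ℝ) - (↑(3 * (N / 4)) : ℝ)) * (4 * lam / N)

/-- The Shishkin transition parameter `λ = α ε ln N` with `α = k + 1`. -/
def shLam (k N : ℕ) (ε : ℝ) : ℝ := ((k : ℝ) + 1) * ε * Real.log N

/-- The Shishkin mesh points for the parameters `k`, `N`, `ε`. -/
def shPt (k N : ℕ) (ε : ℝ) (i : ℕ) : ℝ := meshPt N (shLam k N ε) i

/-- The fine mesh width `h = 4λ/N`. -/
def shH (k N : ℕ) (ε : ℝ) : ℝ := 4 * shLam k N ε / N

/-- The coarse mesh width `H = 2(1-2λ)/N`. -/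
def shHc (k N : ℕ) (ε : ℝ) : ℝ := 2 * (1 - 2 * shLam k N ε) / N

/-- `w` is `C^{k+1}` (as a function of two variables). -/
def SmoothC (k : ℕ) (w : ℝ → ℝ → ℝ) : Prop :=
  ContDiff ℝ (k + 1) (fun p : ℝ × ℝ => w p.1 p.2)

/-- The layer decomposition `u = S + E₁ + E₂ + E₃ + E₄ + E₁₂ + E₂₃ + E₃₄ + E₄₁`
on `Ω̄ = [0,1]²`, together with the derivative bounds of Assumption 2.1. -/
structure ShishkinDecomp (k : ℕ) (C₀ ε : ℝ)
    (u S E1 E2 E3 E4 E12 E23 E34 E41 : ℝ → ℝ → ℝ) : Prop where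
  smooth_u : SmoothC k u
  smooth_S : SmoothC k S
  smooth_E1 : SmoothC k E1
  smooth_E2 : SmoothC k E2
  smooth_E3 : SmoothC k E3
  smooth_E4 : SmoothC k E4
  smooth_E12 : SmoothC k E12
  smooth_E23 : SmoothC k E23
  smooth_E34 : SmoothC k E34
  smooth_E41 : SmoothC k E41
  sum_eq : ∀ x ∈ Set.Icc (0:ℝ) 1, ∀ y ∈ Set.Icc (0:ℝ) 1,
    u x y = S x y + E1 x y + E2 x y + E3 x y + E4 x y
      + E12 x y + E23 x y + E34 x y + E41 x y
  bound_S : ∀ i j : ℕ, i + j ≤ k + 1 → ∀ x ∈ Set.Icc (0:ℝ) 1, ∀ y ∈ Set.Icc (0:ℝ) 1,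
    |pdM i j S x y| ≤ C₀
  bound_E1 : ∀ i j : ℕ, i + j ≤ k + 1 → ∀ x ∈ Set.Icc (0:ℝ) 1, ∀ y ∈ Set.Icc (0:ℝ) 1,
    |pdM i j E1 x y| ≤ C₀ * ε ^ ((1 : ℝ) - j) * Real.exp (-y / ε)
  bound_E2 : ∀ i j : ℕ, i + j ≤ k + 1 → ∀ x ∈ Set.Icc (0:ℝ) 1, ∀ y ∈ Set.Icc (0:ℝ) 1,
    |pdM i j E2 x y| ≤ C₀ * ε ^ ((1 : ℝ) - i) * Real.exp (-(1 - x) / ε)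
  bound_E3 : ∀ i j : ℕ, i + j ≤ k + 1 → ∀ x ∈ Set.Icc (0:ℝ) 1, ∀ y ∈ Set.Icc (0:ℝ) 1,
    |pdM i j E3 x y| ≤ C₀ * ε ^ ((1 : ℝ) - j) * Real.exp (-(1 - y) / ε)
  bound_E4 : ∀ i j : ℕ, i + j ≤ k + 1 → ∀ x ∈ Set.Icc (0:ℝ) 1, ∀ y ∈ Set.Icc (0:ℝ) 1,
    |pdM i j E4 x y| ≤ C₀ * ε ^ ((1 : ℝ) - i) * Real.exp (-x / ε)
  bound_E12 : ∀ i j : ℕ, i + j ≤ k + 1 → ∀ x ∈ Set.Icc (0:ℝ) 1, ∀ y ∈ Set.Icc (0:ℝ) 1,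
    |pdM i j E12 x y| ≤ C₀ * ε ^ ((1 : ℝ) - i - j) * Real.exp (-(1 - x) / ε) * Real.exp (-y / ε)
  bound_E23 : ∀ i j : ℕ, i + j ≤ k + 1 → ∀ x ∈ Set.Icc (0:ℝ) 1, ∀ y ∈ Set.Icc (0:ℝ) 1,
    |pdM i j E23 x y| ≤ C₀ * ε ^ ((1 : ℝ) - i - j) * Real.exp (-(1 - x) / ε) * Real.exp (-(1 - y) / ε)
  bound_E34 : ∀ i j : ℕ, i + j ≤ k + 1 → ∀ x ∈ Set.Icc (0:ℝ) 1, ∀ y ∈ Set.Icc (0:ℝ) 1,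
    |pdM i j E34 x y| ≤ C₀ * ε ^ ((1 : ℝ) - i - j) * Real.exp (-x / ε) * Real.exp (-(1 - y) / ε)
  bound_E41 : ∀ i j : ℕ, i + j ≤ k + 1 → ∀ x ∈ Set.Icc (0:ℝ) 1, ∀ y ∈ Set.Icc (0:ℝ) 1,
    |pdM i j E41 x y| ≤ C₀ * ε ^ ((1 : ℝ) - i - j) * Real.exp (-x / ε) * Real.exp (-y / ε)

/-- A discrete weak function on the `N × N` tensor-product mesh with 1D mesh
points `X`. `v0 i j` is the interior value on the element
`[X i, X (i+1)] × [X j, X (j+1)]` (for `i, j < N`); `vbH i j` (resp. `vbV i j`)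
is the boundary value on the horizontal edge `[X i, X (i+1)] × {X j}` (for
`i < N`, `j ≤ N`) (resp. the vertical edge `{X i} × [X j, X (j+1)]`, for
`i ≤ N`, `j < N`), as a function of the running coordinate; `vgH1, vgH2`
(resp. `vgV1, vgV2`) are the two components of the gradient value `𝐯_g`
on horizontal (resp. vertical) edges. -/
structure WGFun where
  v0 : ℕ → ℕ → ℝ → ℝ → ℝ
  vbH : ℕ → ℕ → ℝ → ℝ
  vbV : ℕ → ℕ → ℝ → ℝ
  vgH1 : ℕ → ℕ → ℝ → ℝ
  vgH2 : ℕ → ℕ → ℝ → ℝ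
  vgV1 : ℕ → ℕ → ℝ → ℝ
  vgV2 : ℕ → ℕ → ℝ → ℝ

/-- Componentwise difference of discrete weak functions. -/
def WGFun.sub (u v : WGFun) : WGFun where
  v0 := fun i j x y => u.v0 i j x y - v.v0 i j x y
  vbH := fun i j x => u.vbH i j x - v.vbH i j x
  vbV := fun i j y => u.vbV i j y - v.vbV i j y
  vgH1 := fun i j x => u.vgH1 i j x - v.vgH1 i j x
  vgH2 := fun i j x => u.vgH2 i j x - v.vgH2 i j x
  vgV1 := fun i j y => u.vgV1 i j y - v.vgV1 i j y
  vgV2 := fun i j y => u.vgV2 i j y - v.vgV2 i j y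

/-- Membership in the weak Galerkin space `V_N`. -/
def MemVN (k N : ℕ) (v : WGFun) : Prop :=
  (∀ i < N, ∀ j < N, IsQk k (v.v0 i j)) ∧
  (∀ i < N, ∀ j ≤ N, IsPk k (v.vbH i j) ∧ IsPk k (v.vgH1 i j) ∧ IsPk k (v.vgH2 i j)) ∧
  (∀ i ≤ N, ∀ j < N, IsPk k (v.vbV i j) ∧ IsPk k (v.vgV1 i j) ∧ IsPk k (v.vgV2 i j))

/-- Membership in `V_N⁰`: elements of `V_N` with `v_b = 0` and `𝐯_g·𝐧 = 0` on
all edges contained in `∂Ω`. -/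
def MemVN0 (k N : ℕ) (v : WGFun) : Prop :=
  MemVN k N v ∧
  (∀ i < N, (∀ x : ℝ, v.vbH i 0 x = 0) ∧ (∀ x : ℝ, v.vbH i N x = 0) ∧
            (∀ x : ℝ, v.vgH2 i 0 x = 0) ∧ (∀ x : ℝ, v.vgH2 i N x = 0)) ∧
  (∀ j < N, (∀ y : ℝ, v.vbV 0 j y = 0) ∧ (∀ y : ℝ, v.vbV N j y = 0) ∧
            (∀ y : ℝ, v.vgV1 0 j y = 0) ∧ (∀ y : ℝ, v.vgV1 N j y = 0))

/-- `D i j` is the discrete weak Laplacian `Δ_w v` of `v` on the element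
`[X i, X (i+1)] × [X j, X (j+1)]`, for all `i, j < N`, characterized by the
defining identity (outward normals: bottom `(0,-1)`, top `(0,1)`, left `(-1,0)`,
right `(1,0)`). -/
def IsWeakLap (k N : ℕ) (X : ℕ → ℝ) (v : WGFun) (D : ℕ → ℕ → ℝ → ℝ → ℝ) : Prop :=
  ∀ i < N, ∀ j < N, IsQk k (D i j) ∧
    ∀ φ : ℝ → ℝ → ℝ, IsQk k φ →
      ipT (X i) (X (i+1)) (X j) (X (j+1)) (D i j) φ =
        ipT (X i) (X (i+1)) (X j) (X (j+1)) (v.v0 i j) (lapl φ)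
          - ((∫ x in (X i)..(X (i+1)), v.vbH i j x * (-(pd2 φ x (X j))))
            + (∫ x in (X i)..(X (i+1)), v.vbH i (j+1) x * pd2 φ x (X (j+1)))
            + (∫ y in (X j)..(X (j+1)), v.vbV i j y * (-(pd1 φ (X i) y)))
            + (∫ y in (X j)..(X (j+1)), v.vbV (i+1) j y * pd1 φ (X (i+1)) y))
          + ((∫ x in (X i)..(X (i+1)), (-(v.vgH2 i j x)) * φ x (X j))
            + (∫ x in (X i)..(X (i+1)), v.vgH2 i (j+1) x * φ x (X (j+1)))
            + (∫ y in (X j)..(X (j+1)), (-(v.vgV1 i j y)) * φ (X i) y)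
            + (∫ y in (X j)..(X (j+1)), v.vgV1 (i+1) j y * φ (X (i+1)) y))

/-- `(G1 i j, G2 i j)` is the discrete weak gradient `∇_w v` of `v` on the
element `[X i, X (i+1)] × [X j, X (j+1)]`, for all `i, j < N`, characterized by
the defining identity. -/
def IsWeakGrad (k N : ℕ) (X : ℕ → ℝ) (v : WGFun) (G1 G2 : ℕ → ℕ → ℝ → ℝ → ℝ) : Prop :=
  ∀ i < N, ∀ j < N, IsQk k (G1 i j) ∧ IsQk k (G2 i j) ∧
    ∀ q1 q2 : ℝ → ℝ → ℝ, IsQk k q1 → IsQk k q2 →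
      ipT (X i) (X (i+1)) (X j) (X (j+1)) (G1 i j) q1
        + ipT (X i) (X (i+1)) (X j) (X (j+1)) (G2 i j) q2 =
        -(ipT (X i) (X (i+1)) (X j) (X (j+1)) (v.v0 i j)
            (fun x y => pd1 q1 x y + pd2 q2 x y))
          + ((∫ x in (X i)..(X (i+1)), v.vbH i j x * (-(q2 x (X j))))
            + (∫ x in (X i)..(X (i+1)), v.vbH i (j+1) x * q2 x (X (j+1)))
            + (∫ y in (X j)..(X (j+1)), v.vbV i j y * (-(q1 (X i) y)))
            + (∫ y in (X j)..(X (j+1)), v.vbV (i+1) j y * q1 (X (i+1)) y))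

/-- The boundary pairing `⟨u₀ − u_b, v₀ − v_b⟩_{∂T}` on the element `(i,j)`. -/
def sPair (X : ℕ → ℝ) (u v : WGFun) (i j : ℕ) : ℝ :=
  (∫ x in (X i)..(X (i+1)),
    (u.v0 i j x (X j) - u.vbH i j x) * (v.v0 i j x (X j) - v.vbH i j x))
  + (∫ x in (X i)..(X (i+1)),
    (u.v0 i j x (X (j+1)) - u.vbH i (j+1) x) * (v.v0 i j x (X (j+1)) - v.vbH i (j+1) x))
  + (∫ y in (X j)..(X (j+1)),
    (u.v0 i j (X i) y - u.vbV i j y) * (v.v0 i j (X i) y - v.vbV i j y))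
  + (∫ y in (X j)..(X (j+1)),
    (u.v0 i j (X (i+1)) y - u.vbV (i+1) j y) * (v.v0 i j (X (i+1)) y - v.vbV (i+1) j y))

/-- The boundary pairing `⟨∇u₀ − 𝐮_g, ∇v₀ − 𝐯_g⟩_{∂T}` on the element `(i,j)`. -/
def sPairG (X : ℕ → ℝ) (u v : WGFun) (i j : ℕ) : ℝ :=
  (∫ x in (X i)..(X (i+1)),
    ((pd1 (u.v0 i j) x (X j) - u.vgH1 i j x) * (pd1 (v.v0 i j) x (X j) - v.vgH1 i j x)
      + (pd2 (u.v0 i j) x (X j) - u.vgH2 i j x) * (pd2 (v.v0 i j) x (X j) - v.vgH2 i j x)))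
  + (∫ x in (X i)..(X (i+1)),
    ((pd1 (u.v0 i j) x (X (j+1)) - u.vgH1 i (j+1) x) * (pd1 (v.v0 i j) x (X (j+1)) - v.vgH1 i (j+1) x)
      + (pd2 (u.v0 i j) x (X (j+1)) - u.vgH2 i (j+1) x) * (pd2 (v.v0 i j) x (X (j+1)) - v.vgH2 i (j+1) x)))
  + (∫ y in (X j)..(X (j+1)),
    ((pd1 (u.v0 i j) (X i) y - u.vgV1 i j y) * (pd1 (v.v0 i j) (X i) y - v.vgV1 i j y)
      + (pd2 (u.v0 i j) (X i) y - u.vgV2 i j y) * (pd2 (v.v0 i j) (X i) y - v.vgV2 i j y)))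
  + (∫ y in (X j)..(X (j+1)),
    ((pd1 (u.v0 i j) (X (i+1)) y - u.vgV1 (i+1) j y) * (pd1 (v.v0 i j) (X (i+1)) y - v.vgV1 (i+1) j y)
      + (pd2 (u.v0 i j) (X (i+1)) y - u.vgV2 (i+1) j y) * (pd2 (v.v0 i j) (X (i+1)) y - v.vgV2 (i+1) j y)))

/-- The stabilizer `s(u,v)` with fine mesh width `h` and coarse mesh width `H`. -/
def stab (N : ℕ) (X : ℕ → ℝ) (ε h H : ℝ) (u v : WGFun) : ℝ :=
  ∑ i ∈ Finset.range N, ∑ j ∈ Finset.range N,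
    (ε ^ 2 * h⁻¹ * sPairG X u v i j
      + (ε ^ 2 * (h ^ 2)⁻¹ * H⁻¹ + H⁻¹) * sPair X u v i j)

/-- The bilinear form `a(u,v)`, expressed in terms of the discrete weak
Laplacians `Du, Dv` and weak gradients `(Gu1,Gu2), (Gv1,Gv2)` of `u` and `v`. -/
def aForm (N : ℕ) (X : ℕ → ℝ) (ε h H : ℝ) (u v : WGFun)
    (Du Dv Gu1 Gu2 Gv1 Gv2 : ℕ → ℕ → ℝ → ℝ → ℝ) : ℝ :=
  (∑ i ∈ Finset.range N, ∑ j ∈ Finset.range N,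
    (ε ^ 2 * ipT (X i) (X (i+1)) (X j) (X (j+1)) (Du i j) (Dv i j)
      + ipT (X i) (X (i+1)) (X j) (X (j+1)) (Gu1 i j) (Gv1 i j)
      + ipT (X i) (X (i+1)) (X j) (X (j+1)) (Gu2 i j) (Gv2 i j)))
  + stab N X ε h H u v

/-- `Qu = Q_N u = (Q₀u, Q_b u, 𝐐_g(∇u))`: all components are the corresponding
elementwise / edgewise L²-orthogonal projections of `u`, `u|_e` and `∇u|_e`. -/
def IsQNProj (k N : ℕ) (X : ℕ → ℝ) (u : ℝ → ℝ → ℝ) (Qu : WGFun) : Prop :=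
  (∀ i < N, ∀ j < N,
    IsProjT k (X i) (X (i+1)) (X j) (X (j+1)) u (Qu.v0 i j)) ∧
  (∀ i < N, ∀ j ≤ N,
    IsProjE k (X i) (X (i+1)) (fun x => u x (X j)) (Qu.vbH i j) ∧
    IsProjE k (X i) (X (i+1)) (fun x => pd1 u x (X j)) (Qu.vgH1 i j) ∧
    IsProjE k (X i) (X (i+1)) (fun x => pd2 u x (X j)) (Qu.vgH2 i j)) ∧
  (∀ i ≤ N, ∀ j < N,
    IsProjE k (X j) (X (j+1)) (fun y => u (X i) y) (Qu.vbV i j) ∧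
    IsProjE k (X j) (X (j+1)) (fun y => pd1 u (X i) y) (Qu.vgV1 i j) ∧
    IsProjE k (X j) (X (j+1)) (fun y => pd2 u (X i) y) (Qu.vgV2 i j))

/-- `l₁(u,v) = Σ_T ε² ⟨Δu − Q₀Δu, (∇v₀ − 𝐯_g)·𝐧⟩_{∂T}`, where `P i j = Q₀Δu` on
the element `(i,j)`. -/
def lForm1 (N : ℕ) (X : ℕ → ℝ) (ε : ℝ) (u : ℝ → ℝ → ℝ)
    (P : ℕ → ℕ → ℝ → ℝ → ℝ) (v : WGFun) : ℝ :=
  ∑ i ∈ Finset.range N, ∑ j ∈ Finset.range N, ε ^ 2 *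
    ((∫ x in (X i)..(X (i+1)),
        (lapl u x (X j) - P i j x (X j)) * (-(pd2 (v.v0 i j) x (X j) - v.vgH2 i j x)))
      + (∫ x in (X i)..(X (i+1)),
        (lapl u x (X (j+1)) - P i j x (X (j+1)))
          * (pd2 (v.v0 i j) x (X (j+1)) - v.vgH2 i (j+1) x))
      + (∫ y in (X j)..(X (j+1)),
        (lapl u (X i) y - P i j (X i) y) * (-(pd1 (v.v0 i j) (X i) y - v.vgV1 i j y)))
      + (∫ y in (X j)..(X (j+1)),
        (lapl u (X (i+1)) y - P i j (X (i+1)) y)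
          * (pd1 (v.v0 i j) (X (i+1)) y - v.vgV1 (i+1) j y)))

/-- `l₂(u,v) = Σ_T ε² ⟨∇(Δu − Q₀Δu)·𝐧, v₀ − v_b⟩_{∂T}`, where `P i j = Q₀Δu` on
the element `(i,j)`. -/
def lForm2 (N : ℕ) (X : ℕ → ℝ) (ε : ℝ) (u : ℝ → ℝ → ℝ)
    (P : ℕ → ℕ → ℝ → ℝ → ℝ) (v : WGFun) : ℝ :=
  ∑ i ∈ Finset.range N, ∑ j ∈ Finset.range N, ε ^ 2 *
    ((∫ x in (X i)..(X (i+1)),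
        (-(pd2 (fun a b => lapl u a b - P i j a b) x (X j)))
          * (v.v0 i j x (X j) - v.vbH i j x))
      + (∫ x in (X i)..(X (i+1)),
        (pd2 (fun a b => lapl u a b - P i j a b) x (X (j+1)))
          * (v.v0 i j x (X (j+1)) - v.vbH i (j+1) x))
      + (∫ y in (X j)..(X (j+1)),
        (-(pd1 (fun a b => lapl u a b - P i j a b) (X i) y))
          * (v.v0 i j (X i) y - v.vbV i j y))
      + (∫ y in (X j)..(X (j+1)),
        (pd1 (fun a b => lapl u a b - P i j a b) (X (i+1)) y)
          * (v.v0 i j (X (i+1)) y - v.vbV (i+1) j y)))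

/-- `l₃(u,v) = Σ_T ⟨(∇u − 𝐐_N∇u)·𝐧, v₀ − v_b⟩_{∂T}`, where `(P1 i j, P2 i j) =
𝐐_N(∇u)` on the element `(i,j)`. -/
def lForm3 (N : ℕ) (X : ℕ → ℝ) (u : ℝ → ℝ → ℝ)
    (P1 P2 : ℕ → ℕ → ℝ → ℝ → ℝ) (v : WGFun) : ℝ :=
  ∑ i ∈ Finset.range N, ∑ j ∈ Finset.range N,
    ((∫ x in (X i)..(X (i+1)),
        (-(pd2 u x (X j) - P2 i j x (X j))) * (v.v0 i j x (X j) - v.vbH i j x))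
      + (∫ x in (X i)..(X (i+1)),
        (pd2 u x (X (j+1)) - P2 i j x (X (j+1))) * (v.v0 i j x (X (j+1)) - v.vbH i (j+1) x))
      + (∫ y in (X j)..(X (j+1)),
        (-(pd1 u (X i) y - P1 i j (X i) y)) * (v.v0 i j (X i) y - v.vbV i j y))
      + (∫ y in (X j)..(X (j+1)),
        (pd1 u (X (i+1)) y - P1 i j (X (i+1)) y) * (v.v0 i j (X (i+1)) y - v.vbV (i+1) j y)))

section Aux

open Set intervalIntegral

/-- Sum-of-monomials form with exponents at most `k`. -/
def SF (k : ℕ) (v : ℝ → ℝ → ℝ) : Prop :=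
  ∃ c : ℕ → ℕ → ℝ, ∀ x y : ℝ,
    v x y = ∑ i ∈ Finset.range (k+1), ∑ j ∈ Finset.range (k+1), c i j * x ^ i * y ^ j

lemma SF.cont {k : ℕ} {v : ℝ → ℝ → ℝ} (h : SF k v) :
    Continuous fun p : ℝ × ℝ => v p.1 p.2 := by
  obtain ⟨c, hc⟩ := h
  have : (fun p : ℝ × ℝ => v p.1 p.2) = fun p : ℝ × ℝ =>
      ∑ i ∈ Finset.range (k+1), ∑ j ∈ Finset.range (k+1), c i j * p.1 ^ i * p.2 ^ j := by
    funext p; exact hc p.1 p.2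
  rw [this]
  exact continuous_finset_sum _ fun i _ => continuous_finset_sum _ fun j _ =>
    (continuous_const.mul (continuous_fst.pow i)).mul (continuous_snd.pow j)

lemma SF.cont1 {k : ℕ} {v : ℝ → ℝ → ℝ} (h : SF k v) (y : ℝ) :
    Continuous fun x => v x y :=
  h.cont.comp (continuous_id.prodMk continuous_const)

lemma SF.cont2 {k : ℕ} {v : ℝ → ℝ → ℝ} (h : SF k v) (x : ℝ) :
    Continuous fun y => v x y :=
  h.cont.comp (continuous_const.prodMk continuous_id)

lemma SF.hasDerivAt1 {k : ℕ} {v : ℝ → ℝ → ℝ} (h : SF k v) (x y : ℝ) :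
    HasDerivAt (fun t => v t y) (pd1 v x y) x := by
  obtain ⟨c, hc⟩ := h
  have hfun : (fun t => v t y) = fun t =>
      ∑ i ∈ Finset.range (k+1), ∑ j ∈ Finset.range (k+1), c i j * t ^ i * y ^ j :=
    funext fun t => hc t y
  have hd : DifferentiableAt ℝ (fun t => v t y) x := by
    rw [hfun]
    exact DifferentiableAt.fun_sum fun i _ => DifferentiableAt.fun_sum fun j _ =>
      (((differentiableAt_pow i).const_mul (c i j)).mul_const (y ^ j))
  exact hd.hasDerivAt

lemma SF.hasDerivAt2 {k : ℕ} {v : ℝ → ℝ → ℝ} (h : SF k v) (x y : ℝ) :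
    HasDerivAt (fun t => v x t) (pd2 v x y) y := by
  obtain ⟨c, hc⟩ := h
  have hfun : (fun t => v x t) = fun t =>
      ∑ i ∈ Finset.range (k+1), ∑ j ∈ Finset.range (k+1), c i j * x ^ i * t ^ j :=
    funext fun t => hc x t
  have hd : DifferentiableAt ℝ (fun t => v x t) y := by
    rw [hfun]
    exact DifferentiableAt.fun_sum fun i _ => DifferentiableAt.fun_sum fun j _ =>
      ((differentiableAt_pow j).const_mul (c i j * x ^ i))
  exact hd.hasDerivAt

lemma SF.pd1_sf {k : ℕ} {v : ℝ → ℝ → ℝ} (h : SF k v) : SF k (pd1 v) := by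
  obtain ⟨c, hc⟩ := h
  classical
  refine ⟨fun i j => if i + 1 ≤ k then ((i : ℝ) + 1) * c (i+1) j else 0, fun x y => ?_⟩
  have hD : HasDerivAt (fun t => v t y)
      (∑ i ∈ Finset.range (k+1), ∑ j ∈ Finset.range (k+1),
        c i j * ((i : ℝ) * x ^ (i - 1)) * y ^ j) x := by
    have hfun : (fun t => v t y) = fun t =>
        ∑ i ∈ Finset.range (k+1), ∑ j ∈ Finset.range (k+1), c i j * t ^ i * y ^ j :=
      funext fun t => hc t y
    rw [hfun]
    exact HasDerivAt.fun_sum fun i _ => HasDerivAt.fun_sum fun j _ =>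
      (((hasDerivAt_pow i x).const_mul (c i j)).mul_const (y ^ j))
  have h0 : pd1 v x y = ∑ i ∈ Finset.range (k+1), ∑ j ∈ Finset.range (k+1),
      c i j * ((i : ℝ) * x ^ (i - 1)) * y ^ j := hD.deriv
  rw [h0, Finset.sum_range_succ' (fun i => ∑ j ∈ Finset.range (k+1),
      c i j * ((i : ℝ) * x ^ (i - 1)) * y ^ j) k]
  simp only [Nat.cast_zero, zero_mul, mul_zero, Finset.sum_const_zero, add_zero]
  conv_rhs => rw [Finset.sum_range_succ]
  have hz2 : (∑ j ∈ Finset.range (k+1),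
      (if k + 1 ≤ k then ((k : ℝ) + 1) * c (k+1) j else 0) * x ^ k * y ^ j) = 0 := by
    simp [if_neg (by omega : ¬ k + 1 ≤ k)]
  rw [hz2, add_zero]
  refine Finset.sum_congr rfl fun i hi => Finset.sum_congr rfl fun j _ => ?_
  rw [if_pos (Nat.succ_le_of_lt (Finset.mem_range.mp hi))]
  simp only [Nat.add_sub_cancel]
  push_cast
  ring

lemma SF.pd2_sf {k : ℕ} {v : ℝ → ℝ → ℝ} (h : SF k v) : SF k (pd2 v) := by
  obtain ⟨c, hc⟩ := h
  classical
  refine ⟨fun i j => if j + 1 ≤ k then ((j : ℝ) + 1) * c i (j+1) else 0, fun x y => ?_⟩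
  have hD : HasDerivAt (fun t => v x t)
      (∑ i ∈ Finset.range (k+1), ∑ j ∈ Finset.range (k+1),
        (c i j * x ^ i) * ((j : ℝ) * y ^ (j - 1))) y := by
    have hfun : (fun t => v x t) = fun t =>
        ∑ i ∈ Finset.range (k+1), ∑ j ∈ Finset.range (k+1), c i j * x ^ i * t ^ j :=
      funext fun t => hc x t
    rw [hfun]
    exact HasDerivAt.fun_sum fun i _ => HasDerivAt.fun_sum fun j _ =>
      ((hasDerivAt_pow j y).const_mul (c i j * x ^ i))
  have h0 : pd2 v x y = ∑ i ∈ Finset.range (k+1), ∑ j ∈ Finset.range (k+1),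
      (c i j * x ^ i) * ((j : ℝ) * y ^ (j - 1)) := hD.deriv
  rw [h0]
  refine Finset.sum_congr rfl fun i _ => ?_
  rw [Finset.sum_range_succ' (fun j => c i j * x ^ i * ((j : ℝ) * y ^ (j - 1))) k]
  simp only [Nat.cast_zero, zero_mul, mul_zero, add_zero]
  conv_rhs => rw [Finset.sum_range_succ]
  rw [if_neg (by omega : ¬ k + 1 ≤ k)]
  simp only [zero_mul, add_zero]
  refine Finset.sum_congr rfl fun j hj => ?_
  rw [if_pos (Nat.succ_le_of_lt (Finset.mem_range.mp hj))]
  simp only [Nat.add_sub_cancel]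
  push_cast
  ring

end Aux

lemma IsQk.sf {k : ℕ} {v : ℝ → ℝ → ℝ} (h : IsQk k v) : SF k v := by
  classical
  obtain ⟨p, hdeg, hev⟩ := h
  refine ⟨fun i j => p.coeff (Finsupp.single 0 i + Finsupp.single 1 j), fun x y => ?_⟩
  rw [hev x y, MvPolynomial.eval_eq']
  set e : ℕ × ℕ → (Fin 2 →₀ ℕ) := fun m => Finsupp.single 0 m.1 + Finsupp.single 1 m.2 with he
  have he0 : ∀ m : ℕ × ℕ, e m 0 = m.1 := by
    intro m; simp [he, Finsupp.single_apply]
  have he1 : ∀ m : ℕ × ℕ, e m 1 = m.2 := by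
    intro m; simp [he, Finsupp.single_apply]
  have hinj : ∀ a ∈ Finset.range (k+1) ×ˢ Finset.range (k+1),
      ∀ b ∈ Finset.range (k+1) ×ˢ Finset.range (k+1), e a = e b → a = b := by
    intro a _ b _ hab
    have h0 : e a 0 = e b 0 := by rw [hab]
    have h1 : e a 1 = e b 1 := by rw [hab]
    rw [he0, he0] at h0; rw [he1, he1] at h1
    exact Prod.ext h0 h1
  have hsub : p.support ⊆ (Finset.range (k+1) ×ˢ Finset.range (k+1)).image e := by
    intro d hd
    refine Finset.mem_image.mpr ⟨(d 0, d 1), ?_, ?_⟩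
    · refine Finset.mem_product.mpr ⟨Finset.mem_range.mpr ?_, Finset.mem_range.mpr ?_⟩
      · exact Nat.lt_succ_of_le ((MvPolynomial.monomial_le_degreeOf 0 hd).trans (hdeg 0))
      · exact Nat.lt_succ_of_le ((MvPolynomial.monomial_le_degreeOf 1 hd).trans (hdeg 1))
    · refine Finsupp.ext ?_
      rw [Fin.forall_fin_two]
      exact ⟨he0 _, he1 _⟩
  have key : ∀ d : Fin 2 →₀ ℕ, (∏ i, (![x, y]) i ^ d i) = x ^ d 0 * y ^ d 1 := by
    intro d; rw [Fin.prod_univ_two]; simp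
  calc ∑ d ∈ p.support, MvPolynomial.coeff d p * ∏ i, (![x, y]) i ^ d i
      = ∑ d ∈ p.support, p.coeff d * x ^ d 0 * y ^ d 1 := by
        refine Finset.sum_congr rfl fun d _ => ?_
        rw [key d, ← mul_assoc]
    _ = ∑ d ∈ (Finset.range (k+1) ×ˢ Finset.range (k+1)).image e,
        p.coeff d * x ^ d 0 * y ^ d 1 := by
        refine Finset.sum_subset hsub fun d _ hd => ?_
        rw [MvPolynomial.notMem_support_iff.mp hd, zero_mul, zero_mul]
    _ = ∑ m ∈ Finset.range (k+1) ×ˢ Finset.range (k+1),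
        p.coeff (e m) * x ^ (e m 0) * y ^ (e m 1) := Finset.sum_image hinj
    _ = ∑ m ∈ Finset.range (k+1) ×ˢ Finset.range (k+1),
        p.coeff (e m) * x ^ m.1 * y ^ m.2 := by
        refine Finset.sum_congr rfl fun m _ => ?_
        rw [he0, he1]
    _ = ∑ i ∈ Finset.range (k+1), ∑ j ∈ Finset.range (k+1),
        p.coeff (e (i, j)) * x ^ i * y ^ j := by rw [Finset.sum_product]
    _ = _ := rfl

lemma SF.isQk {k : ℕ} {v : ℝ → ℝ → ℝ} (h : SF k v) : IsQk k v := by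
  classical
  obtain ⟨c, hc⟩ := h
  refine ⟨∑ i ∈ Finset.range (k+1), ∑ j ∈ Finset.range (k+1),
      MvPolynomial.C (c i j) * MvPolynomial.X 0 ^ i * MvPolynomial.X 1 ^ j, ?_, ?_⟩
  · intro n
    refine (MvPolynomial.degreeOf_sum_le _ _ _).trans (Finset.sup_le fun i hi => ?_)
    refine (MvPolynomial.degreeOf_sum_le _ _ _).trans (Finset.sup_le fun j hj => ?_)
    have hik : i ≤ k := Nat.lt_succ_iff.mp (Finset.mem_range.mp hi)
    have hjk : j ≤ k := Nat.lt_succ_iff.mp (Finset.mem_range.mp hj)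
    calc MvPolynomial.degreeOf n (MvPolynomial.C (c i j) * MvPolynomial.X 0 ^ i * MvPolynomial.X 1 ^ j)
        ≤ MvPolynomial.degreeOf n (MvPolynomial.C (c i j) * MvPolynomial.X 0 ^ i)
          + MvPolynomial.degreeOf n (MvPolynomial.X 1 ^ j) := MvPolynomial.degreeOf_mul_le _ _ _
      _ ≤ (MvPolynomial.degreeOf n (MvPolynomial.C (c i j))
            + MvPolynomial.degreeOf n ((MvPolynomial.X 0 : MvPolynomial (Fin 2) ℝ) ^ i))
          + MvPolynomial.degreeOf n ((MvPolynomial.X 1 : MvPolynomial (Fin 2) ℝ) ^ j) :=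
            Nat.add_le_add_right (MvPolynomial.degreeOf_mul_le _ _ _) _
      _ ≤ (0 + i * MvPolynomial.degreeOf n (MvPolynomial.X 0 : MvPolynomial (Fin 2) ℝ))
          + j * MvPolynomial.degreeOf n (MvPolynomial.X 1 : MvPolynomial (Fin 2) ℝ) :=
            Nat.add_le_add (Nat.add_le_add (le_of_eq (MvPolynomial.degreeOf_C _ _))
              (MvPolynomial.degreeOf_pow_le _ _ _)) (MvPolynomial.degreeOf_pow_le _ _ _)
      _ ≤ k := by
            rw [MvPolynomial.degreeOf_X, MvPolynomial.degreeOf_X]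
            fin_cases n <;> simp <;> omega
  · intro x y
    rw [hc x y]
    simp [map_sum, map_mul, map_pow, MvPolynomial.eval_C, MvPolynomial.eval_X,
      Matrix.cons_val_zero, Matrix.cons_val_one, Matrix.head_cons]

lemma IsPk.cont {k : ℕ} {f : ℝ → ℝ} (h : IsPk k f) : Continuous f := by
  obtain ⟨p, _, hp⟩ := h
  have : f = fun x => p.eval x := funext hp
  rw [this]; exact p.continuous

lemma zero1 {f : ℝ → ℝ} {a b : ℝ} (hf : Continuous f) (hab : a < b)
    (hnn : ∀ x, 0 ≤ f x) (h0 : ∫ x in a..b, f x = 0) :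
    ∀ x ∈ Set.Icc a b, f x = 0 := by
  have hi : IntervalIntegrable f MeasureTheory.volume a b := hf.intervalIntegrable a b
  have hae : f =ᵐ[MeasureTheory.volume.restrict (Set.Ioc a b)] 0 :=
    (intervalIntegral.integral_eq_zero_iff_of_le_of_nonneg_ae hab.le
      (Filter.Eventually.of_forall hnn) hi).mp h0
  have hae' : f =ᵐ[MeasureTheory.volume.restrict (Set.Icc a b)] 0 := by
    rwa [MeasureTheory.Measure.restrict_congr_set MeasureTheory.Ioc_ae_eq_Icc] at hae
  intro x hx
  exact MeasureTheory.Measure.eqOn_Icc_of_ae_eq (μ := MeasureTheory.volume) hab.ne hae'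
    hf.continuousOn continuousOn_const hx

lemma zero1sq {f : ℝ → ℝ} {a b : ℝ} (hf : Continuous f) (hab : a < b)
    (h0 : ∫ x in a..b, f x * f x = 0) : ∀ x ∈ Set.Icc a b, f x = 0 := by
  intro x hx
  exact mul_self_eq_zero.mp (zero1 (hf.mul hf) hab (fun x => mul_self_nonneg _) h0 x hx)

lemma contParam {f : ℝ → ℝ → ℝ} (hf : Continuous fun p : ℝ × ℝ => f p.1 p.2) (c d : ℝ) :
    Continuous fun x => ∫ y in c..d, f x y :=
  intervalIntegral.continuous_parametric_intervalIntegral_of_continuous' (f := f) hf c d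

lemma ipT_self_nonneg {x0 x1 y0 y1 : ℝ} (hx : x0 ≤ x1) (hy : y0 ≤ y1) (f : ℝ → ℝ → ℝ) :
    0 ≤ ipT x0 x1 y0 y1 f f := by
  unfold ipT
  refine intervalIntegral.integral_nonneg hx fun x _ => ?_
  exact intervalIntegral.integral_nonneg hy fun y _ => mul_self_nonneg _

lemma ipT_zero_left {x0 x1 y0 y1 : ℝ} (hx : x0 ≤ x1) (hy : y0 ≤ y1) {f : ℝ → ℝ → ℝ}
    (g : ℝ → ℝ → ℝ)
    (hf : ∀ x ∈ Set.Icc x0 x1, ∀ y ∈ Set.Icc y0 y1, f x y = 0) :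
    ipT x0 x1 y0 y1 f g = 0 := by
  unfold ipT
  have h1 : Set.EqOn (fun x => ∫ y in y0..y1, f x y * g x y) (fun _ => (0:ℝ))
      (Set.uIcc x0 x1) := by
    intro x hxx
    have hxx' : x ∈ Set.Icc x0 x1 := by rwa [Set.uIcc_of_le hx] at hxx
    have h2 : Set.EqOn (fun y => f x y * g x y) (fun _ => (0:ℝ)) (Set.uIcc y0 y1) := by
      intro y hyy
      have hyy' : y ∈ Set.Icc y0 y1 := by rwa [Set.uIcc_of_le hy] at hyy
      simp [hf x hxx' y hyy']
    show (∫ y in y0..y1, f x y * g x y) = 0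
    rw [intervalIntegral.integral_congr h2, intervalIntegral.integral_zero]
  rw [intervalIntegral.integral_congr h1, intervalIntegral.integral_zero]

lemma zero2 {f : ℝ → ℝ → ℝ} {x0 x1 y0 y1 : ℝ}
    (hf : Continuous fun p : ℝ × ℝ => f p.1 p.2) (hx : x0 < x1) (hy : y0 < y1)
    (h0 : ipT x0 x1 y0 y1 f f = 0) :
    ∀ x ∈ Set.Icc x0 x1, ∀ y ∈ Set.Icc y0 y1, f x y = 0 := by
  unfold ipT at h0
  have hcg : Continuous fun x => ∫ y in y0..y1, f x y * f x y := contParam (hf.mul hf) y0 y1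
  have hgnn : ∀ x, 0 ≤ ∫ y in y0..y1, f x y * f x y := fun x =>
    intervalIntegral.integral_nonneg hy.le fun y _ => mul_self_nonneg _
  have hgz := zero1 hcg hx hgnn h0
  intro x hxm y hym
  exact zero1sq (hf.comp (continuous_const.prodMk continuous_id)) hy (hgz x hxm) y hym

lemma fubini_cont {f : ℝ → ℝ → ℝ} {x0 x1 y0 y1 : ℝ}
    (hf : Continuous fun p : ℝ × ℝ => f p.1 p.2) (hx : x0 ≤ x1) (hy : y0 ≤ y1) :
    ∫ x in x0..x1, ∫ y in y0..y1, f x y = ∫ y in y0..y1, ∫ x in x0..x1, f x y := by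
  have hint : MeasureTheory.Integrable (Function.uncurry f)
      ((MeasureTheory.volume.restrict (Set.Ioc x0 x1)).prod
        (MeasureTheory.volume.restrict (Set.Ioc y0 y1))) := by
    rw [MeasureTheory.Measure.prod_restrict]
    refine MeasureTheory.IntegrableOn.mono_set ?_
      (Set.prod_mono Set.Ioc_subset_Icc_self Set.Ioc_subset_Icc_self)
    exact hf.continuousOn.integrableOn_compact (isCompact_Icc.prod isCompact_Icc)
  have hsw := MeasureTheory.integral_integral_swap hint
  simp only [intervalIntegral.integral_of_le hx, intervalIntegral.integral_of_le hy]
  exact hsw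

lemma const_of_deriv_zero {g dg : ℝ → ℝ} {a b : ℝ}
    (hd : ∀ x, HasDerivAt g (dg x) x) (hz : ∀ x ∈ Set.Icc a b, dg x = 0) :
    ∀ x ∈ Set.Icc a b, g x = g a := by
  refine constant_of_derivWithin_zero
    (fun x _ => (hd x).differentiableAt.differentiableWithinAt) ?_
  intro x hx
  have hab : a < b := lt_of_le_of_lt hx.1 hx.2
  have hu : UniqueDiffWithinAt ℝ (Set.Icc a b) x :=
    (uniqueDiffOn_Icc hab) x (Set.Ico_subset_Icc_self hx)
  rw [(hd x).differentiableAt.derivWithin hu, (hd x).deriv]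
  exact hz x (Set.Ico_subset_Icc_self hx)

lemma ipT_add_right {x0 x1 y0 y1 : ℝ} {f g1 g2 : ℝ → ℝ → ℝ}
    (hf : Continuous fun p : ℝ × ℝ => f p.1 p.2)
    (hg1 : Continuous fun p : ℝ × ℝ => g1 p.1 p.2)
    (hg2 : Continuous fun p : ℝ × ℝ => g2 p.1 p.2) :
    ipT x0 x1 y0 y1 f (fun x y => g1 x y + g2 x y)
      = ipT x0 x1 y0 y1 f g1 + ipT x0 x1 y0 y1 f g2 := by
  unfold ipT
  have hc1 : Continuous fun p : ℝ × ℝ => f p.1 p.2 * g1 p.1 p.2 := hf.mul hg1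
  have hc2 : Continuous fun p : ℝ × ℝ => f p.1 p.2 * g2 p.1 p.2 := hf.mul hg2
  rw [← intervalIntegral.integral_add ((contParam hc1 y0 y1).intervalIntegrable x0 x1)
      ((contParam hc2 y0 y1).intervalIntegrable x0 x1)]
  refine intervalIntegral.integral_congr fun x _ => ?_
  have hi1 : IntervalIntegrable (fun y => f x y * g1 x y) MeasureTheory.volume y0 y1 :=
    (hc1.comp (continuous_const.prodMk continuous_id)).intervalIntegrable _ _
  have hi2 : IntervalIntegrable (fun y => f x y * g2 x y) MeasureTheory.volume y0 y1 :=
    (hc2.comp (continuous_const.prodMk continuous_id)).intervalIntegrable _ _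
  show (∫ y in y0..y1, f x y * (g1 x y + g2 x y))
      = (∫ y in y0..y1, f x y * g1 x y) + ∫ y in y0..y1, f x y * g2 x y
  rw [← intervalIntegral.integral_add hi1 hi2]
  refine intervalIntegral.integral_congr fun y _ => ?_
  show f x y * (g1 x y + g2 x y) = f x y * g1 x y + f x y * g2 x y
  ring

lemma ibp_y {k : ℕ} {v0 q2 : ℝ → ℝ → ℝ} {x0 x1 y0 y1 : ℝ}
    (hv : SF k v0) (hq : SF k q2) :
    ipT x0 x1 y0 y1 v0 (pd2 q2) + ipT x0 x1 y0 y1 (pd2 v0) q2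
      = (∫ x in x0..x1, v0 x y1 * q2 x y1) - ∫ x in x0..x1, v0 x y0 * q2 x y0 := by
  have hc1 : Continuous fun p : ℝ × ℝ => v0 p.1 p.2 * pd2 q2 p.1 p.2 :=
    hv.cont.mul hq.pd2_sf.cont
  have hc2 : Continuous fun p : ℝ × ℝ => pd2 v0 p.1 p.2 * q2 p.1 p.2 :=
    hv.pd2_sf.cont.mul hq.cont
  have key : ∀ x : ℝ, (∫ y in y0..y1, v0 x y * pd2 q2 x y)
      + (∫ y in y0..y1, pd2 v0 x y * q2 x y)
      = v0 x y1 * q2 x y1 - v0 x y0 * q2 x y0 := by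
    intro x
    have hi1 : IntervalIntegrable (fun y => v0 x y * pd2 q2 x y) MeasureTheory.volume y0 y1 :=
      ((hv.cont2 x).mul (hq.pd2_sf.cont2 x)).intervalIntegrable _ _
    have hi2 : IntervalIntegrable (fun y => pd2 v0 x y * q2 x y) MeasureTheory.volume y0 y1 :=
      ((hv.pd2_sf.cont2 x).mul (hq.cont2 x)).intervalIntegrable _ _
    rw [← intervalIntegral.integral_add hi1 hi2]
    have hder : ∀ t ∈ Set.uIcc y0 y1, HasDerivAt (fun u => v0 x u * q2 x u)
        (v0 x t * pd2 q2 x t + pd2 v0 x t * q2 x t) t := by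
      intro t _
      have h3 := (hv.hasDerivAt2 x t).fun_mul (hq.hasDerivAt2 x t)
      rw [add_comm]
      exact h3
    exact intervalIntegral.integral_eq_sub_of_hasDerivAt hder (hi1.add hi2)
  unfold ipT
  rw [← intervalIntegral.integral_add ((contParam hc1 y0 y1).intervalIntegrable x0 x1)
      ((contParam hc2 y0 y1).intervalIntegrable x0 x1),
    ← intervalIntegral.integral_sub (((hv.cont1 y1).fun_mul (hq.cont1 y1)).intervalIntegrable x0 x1)
      (((hv.cont1 y0).fun_mul (hq.cont1 y0)).intervalIntegrable x0 x1)]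
  exact intervalIntegral.integral_congr fun x _ => key x

lemma ibp_x {k : ℕ} {v0 q1 : ℝ → ℝ → ℝ} {x0 x1 y0 y1 : ℝ}
    (hv : SF k v0) (hq : SF k q1) (hx : x0 ≤ x1) (hy : y0 ≤ y1) :
    ipT x0 x1 y0 y1 v0 (pd1 q1) + ipT x0 x1 y0 y1 (pd1 v0) q1
      = (∫ y in y0..y1, v0 x1 y * q1 x1 y) - ∫ y in y0..y1, v0 x0 y * q1 x0 y := by
  have hc1 : Continuous fun p : ℝ × ℝ => v0 p.1 p.2 * pd1 q1 p.1 p.2 :=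
    hv.cont.mul hq.pd1_sf.cont
  have hc2 : Continuous fun p : ℝ × ℝ => pd1 v0 p.1 p.2 * q1 p.1 p.2 :=
    hv.pd1_sf.cont.mul hq.cont
  have hc1' : Continuous fun p : ℝ × ℝ => v0 p.2 p.1 * pd1 q1 p.2 p.1 :=
    hc1.comp continuous_swap
  have hc2' : Continuous fun p : ℝ × ℝ => pd1 v0 p.2 p.1 * q1 p.2 p.1 :=
    hc2.comp continuous_swap
  have hf1 : ipT x0 x1 y0 y1 v0 (pd1 q1)
      = ∫ y in y0..y1, ∫ x in x0..x1, v0 x y * pd1 q1 x y := fubini_cont hc1 hx hy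
  have hf2 : ipT x0 x1 y0 y1 (pd1 v0) q1
      = ∫ y in y0..y1, ∫ x in x0..x1, pd1 v0 x y * q1 x y := fubini_cont hc2 hx hy
  rw [hf1, hf2]
  have key : ∀ y : ℝ, (∫ x in x0..x1, v0 x y * pd1 q1 x y)
      + (∫ x in x0..x1, pd1 v0 x y * q1 x y)
      = v0 x1 y * q1 x1 y - v0 x0 y * q1 x0 y := by
    intro y
    have hi1 : IntervalIntegrable (fun x => v0 x y * pd1 q1 x y) MeasureTheory.volume x0 x1 :=
      ((hv.cont1 y).mul (hq.pd1_sf.cont1 y)).intervalIntegrable _ _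
    have hi2 : IntervalIntegrable (fun x => pd1 v0 x y * q1 x y) MeasureTheory.volume x0 x1 :=
      ((hv.pd1_sf.cont1 y).mul (hq.cont1 y)).intervalIntegrable _ _
    rw [← intervalIntegral.integral_add hi1 hi2]
    have hder : ∀ t ∈ Set.uIcc x0 x1, HasDerivAt (fun u => v0 u y * q1 u y)
        (v0 t y * pd1 q1 t y + pd1 v0 t y * q1 t y) t := by
      intro t _
      have h3 := (hv.hasDerivAt1 t y).fun_mul (hq.hasDerivAt1 t y)
      rw [add_comm]
      exact h3
    exact intervalIntegral.integral_eq_sub_of_hasDerivAt hder (hi1.add hi2)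
  rw [← intervalIntegral.integral_add ((contParam hc1' x0 x1).intervalIntegrable y0 y1)
      ((contParam hc2' x0 x1).intervalIntegrable y0 y1),
    ← intervalIntegral.integral_sub (((hv.cont2 x1).fun_mul (hq.cont2 x1)).intervalIntegrable y0 y1)
      (((hv.cont2 x0).fun_mul (hq.cont2 x0)).intervalIntegrable y0 y1)]
  exact intervalIntegral.integral_congr fun y _ => key y

lemma meshPt_lt {N : ℕ} {lam : ℝ} (hN : 4 ≤ N) (hN4 : 4 ∣ N) (hl0 : 0 < lam)
    (hl : lam ≤ 1/4) : ∀ i < N, meshPt N lam i < meshPt N lam (i+1) := by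
  intro i _
  have hN0 : (0:ℝ) < (N:ℝ) := by exact_mod_cast lt_of_lt_of_le (by norm_num : (0:ℕ) < 4) hN
  have hn4 : 1 ≤ N / 4 := (Nat.one_le_div_iff (by norm_num)).mpr hN
  have hc4 : (N / 4) * 4 = N := Nat.div_mul_cancel hN4
  have hc4R : ((N / 4 : ℕ) : ℝ) * 4 = (N : ℝ) := by exact_mod_cast hc4
  have hs : 0 < 4 * lam / (N:ℝ) := by positivity
  have ht : 0 < 2 * (1 - 2 * lam) / (N:ℝ) := div_pos (by linarith) hN0
  by_cases h1 : i + 1 ≤ N / 4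
  · have h0 : i ≤ N / 4 := le_trans (Nat.le_succ i) h1
    simp only [meshPt, if_pos h0, if_pos h1]
    push_cast
    nlinarith [hs]
  by_cases h2 : i ≤ N / 4
  · have hiq : i = N / 4 := le_antisymm h2 (by omega)
    have h3 : i + 1 ≤ 3 * (N / 4) := by omega
    simp only [meshPt, if_pos h2, if_neg h1, if_pos h3]
    subst hiq
    have h4 : ((N/4 : ℕ):ℝ) * (4 * lam / N) = lam := by
      rw [show ((N/4 : ℕ):ℝ) * (4 * lam / (N:ℝ)) = (((N/4 : ℕ):ℝ) * 4) * lam / (N:ℝ) by ring,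
        hc4R, mul_div_cancel_left₀ lam hN0.ne']
    have h5 : ((N/4 + 1 : ℕ):ℝ) - ((N/4 : ℕ):ℝ) = 1 := by push_cast; ring
    rw [h4, h5, one_mul]
    linarith [ht]
  by_cases h3 : i + 1 ≤ 3 * (N / 4)
  · have h0 : i ≤ 3 * (N / 4) := le_trans (Nat.le_succ i) h3
    simp only [meshPt, if_neg h2, if_pos h0, if_neg h1, if_pos h3]
    push_cast
    nlinarith [ht]
  by_cases h4 : i ≤ 3 * (N / 4)
  · have hiq : i = 3 * (N / 4) := le_antisymm h4 (by omega)
    simp only [meshPt, if_neg h2, if_pos h4, if_neg h1, if_neg h3]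
    subst hiq
    have hlhs : lam + (((3*(N/4) : ℕ):ℝ) - ((N/4 : ℕ):ℝ)) * (2*(1-2*lam)/N) = 1 - lam := by
      have h2a : ((3*(N/4) : ℕ):ℝ) - ((N/4 : ℕ):ℝ) = 2 * ((N/4 : ℕ):ℝ) := by push_cast; ring
      rw [h2a, show 2 * ((N/4 : ℕ):ℝ) * (2*(1-2*lam)/(N:ℝ))
          = (((N/4 : ℕ):ℝ) * 4) * (1-2*lam) / (N:ℝ) by ring, hc4R,
        mul_div_cancel_left₀ (1-2*lam) hN0.ne']
      ring
    have hrhs : ((3*(N/4)+1 : ℕ):ℝ) - ((3*(N/4) : ℕ):ℝ) = 1 := by push_cast; ring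
    rw [hlhs, hrhs, one_mul]
    linarith [hs]
  · have h5 : ¬ i + 1 ≤ 3 * (N / 4) := by omega
    have h6 : ¬ i + 1 ≤ N / 4 := by omega
    simp only [meshPt, if_neg h2, if_neg h4, if_neg h5, if_neg h6]
    push_cast
    nlinarith [hs]

lemma elemZero {k : ℕ} {x0 x1 y0 y1 : ℝ} {v0 : ℝ → ℝ → ℝ} {bB bT bL bR : ℝ → ℝ}
    (hx : x0 < x1) (hy : y0 < y1) (hv0 : SF k v0)
    (hbB : ∀ x ∈ Set.Icc x0 x1, v0 x y0 = bB x)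
    (hbT : ∀ x ∈ Set.Icc x0 x1, v0 x y1 = bT x)
    (hbL : ∀ y ∈ Set.Icc y0 y1, v0 x0 y = bL y)
    (hbR : ∀ y ∈ Set.Icc y0 y1, v0 x1 y = bR y)
    (hid : ∀ q1 q2 : ℝ → ℝ → ℝ, IsQk k q1 → IsQk k q2 →
      0 = -(ipT x0 x1 y0 y1 v0 (fun x y => pd1 q1 x y + pd2 q2 x y))
        + ((∫ x in x0..x1, bB x * (-(q2 x y0))) + (∫ x in x0..x1, bT x * q2 x y1)
          + (∫ y in y0..y1, bL y * (-(q1 x0 y))) + (∫ y in y0..y1, bR y * q1 x1 y))) :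
    ∀ x ∈ Set.Icc x0 x1, ∀ y ∈ Set.Icc y0 y1,
      v0 x y = v0 x0 y0 ∧ pd1 v0 x y = 0 ∧ pd2 v0 x y = 0 := by
  set q1 : ℝ → ℝ → ℝ := pd1 v0 with hq1def
  set q2 : ℝ → ℝ → ℝ := pd2 v0 with hq2def
  have hq1 : SF k q1 := hv0.pd1_sf
  have hq2 : SF k q2 := hv0.pd2_sf
  have h := hid q1 q2 hq1.isQk hq2.isQk
  have eB : (∫ x in x0..x1, bB x * (-(q2 x y0))) = -(∫ x in x0..x1, v0 x y0 * q2 x y0) := by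
    rw [← intervalIntegral.integral_neg]
    refine intervalIntegral.integral_congr fun x hxm => ?_
    have hxm' : x ∈ Set.Icc x0 x1 := by rwa [Set.uIcc_of_le hx.le] at hxm
    rw [← hbB x hxm']; ring
  have eT : (∫ x in x0..x1, bT x * q2 x y1) = ∫ x in x0..x1, v0 x y1 * q2 x y1 := by
    refine intervalIntegral.integral_congr fun x hxm => ?_
    have hxm' : x ∈ Set.Icc x0 x1 := by rwa [Set.uIcc_of_le hx.le] at hxm
    rw [← hbT x hxm']
  have eL : (∫ y in y0..y1, bL y * (-(q1 x0 y))) = -(∫ y in y0..y1, v0 x0 y * q1 x0 y) := by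
    rw [← intervalIntegral.integral_neg]
    refine intervalIntegral.integral_congr fun y hym => ?_
    have hym' : y ∈ Set.Icc y0 y1 := by rwa [Set.uIcc_of_le hy.le] at hym
    rw [← hbL y hym']; ring
  have eR : (∫ y in y0..y1, bR y * q1 x1 y) = ∫ y in y0..y1, v0 x1 y * q1 x1 y := by
    refine intervalIntegral.integral_congr fun y hym => ?_
    have hym' : y ∈ Set.Icc y0 y1 := by rwa [Set.uIcc_of_le hy.le] at hym
    rw [← hbR y hym']
  have hsplit : ipT x0 x1 y0 y1 v0 (fun x y => pd1 q1 x y + pd2 q2 x y)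
      = ipT x0 x1 y0 y1 v0 (pd1 q1) + ipT x0 x1 y0 y1 v0 (pd2 q2) :=
    ipT_add_right hv0.cont hq1.pd1_sf.cont hq2.pd2_sf.cont
  have hibx := ibp_x hv0 hq1 hx.le hy.le
  have hiby := ibp_y (x0 := x0) (x1 := x1) (y0 := y0) (y1 := y1) hv0 hq2
  rw [eB, eT, eL, eR, hsplit] at h
  have hzz : ipT x0 x1 y0 y1 (pd1 v0) q1 + ipT x0 x1 y0 y1 (pd2 v0) q2 = 0 := by
    linarith [hibx, hiby, h]
  have hnn1 : 0 ≤ ipT x0 x1 y0 y1 (pd1 v0) (pd1 v0) := ipT_self_nonneg hx.le hy.le _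
  have hnn2 : 0 ≤ ipT x0 x1 y0 y1 (pd2 v0) (pd2 v0) := ipT_self_nonneg hx.le hy.le _
  have hz1 : ipT x0 x1 y0 y1 (pd1 v0) (pd1 v0) = 0 := by
    rw [hq1def] at hzz; rw [hq2def] at hzz; linarith
  have hz2 : ipT x0 x1 y0 y1 (pd2 v0) (pd2 v0) = 0 := by
    rw [hq1def] at hzz; rw [hq2def] at hzz; linarith
  have hp1 : ∀ x ∈ Set.Icc x0 x1, ∀ y ∈ Set.Icc y0 y1, pd1 v0 x y = 0 :=
    zero2 hq1.cont hx hy hz1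
  have hp2 : ∀ x ∈ Set.Icc x0 x1, ∀ y ∈ Set.Icc y0 y1, pd2 v0 x y = 0 :=
    zero2 hq2.cont hx hy hz2
  intro x hxm y hym
  refine ⟨?_, hp1 x hxm y hym, hp2 x hxm y hym⟩
  have e1 : v0 x y = v0 x0 y := by
    have := const_of_deriv_zero (g := fun t => v0 t y) (dg := fun t => pd1 v0 t y)
      (fun t => hv0.hasDerivAt1 t y) (fun t htm => hp1 t htm y hym) x hxm
    exact this
  have e2 : v0 x0 y = v0 x0 y0 := by
    have := const_of_deriv_zero (g := fun t => v0 x0 t) (dg := fun t => pd2 v0 x0 t)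
      (fun t => hv0.hasDerivAt2 x0 t) (fun t htm => hp2 x0 (Set.left_mem_Icc.mpr hx.le) t htm)
      y hym
    exact this
  rw [e1, e2]

lemma four_zero {a b c d : ℝ} (ha : 0 ≤ a) (hb : 0 ≤ b) (hc : 0 ≤ c) (hd : 0 ≤ d)
    (h : a + b + c + d = 0) : a = 0 ∧ b = 0 ∧ c = 0 ∧ d = 0 :=
  ⟨by linarith, by linarith, by linarith, by linarith⟩

lemma edge_sq_zero {f : ℝ → ℝ} {a b : ℝ} (hf : Continuous f) (hab : a < b)
    (h0 : (∫ x in a..b, f x * f x) = 0) : ∀ x ∈ Set.Icc a b, f x = 0 :=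
  zero1sq hf hab h0

lemma edge_sq2_zero {f g : ℝ → ℝ} {a b : ℝ} (hf : Continuous f) (hg : Continuous g) (hab : a < b)
    (h0 : (∫ x in a..b, (f x * f x + g x * g x)) = 0) :
    ∀ x ∈ Set.Icc a b, f x = 0 ∧ g x = 0 := by
  intro x hx
  have h := zero1 ((hf.fun_mul hf).fun_add (hg.fun_mul hg)) hab
    (fun x => add_nonneg (mul_self_nonneg _) (mul_self_nonneg _)) h0 x hx
  have h1 : f x * f x = 0 := by nlinarith [mul_self_nonneg (f x), mul_self_nonneg (g x)]
  have h2 : g x * g x = 0 := by nlinarith [mul_self_nonneg (f x), mul_self_nonneg (g x)]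
  exact ⟨mul_self_eq_zero.mp h1, mul_self_eq_zero.mp h2⟩

/-- `|||·|||` is a norm on `V_N⁰`; in particular, if `v ∈ V_N⁰`
satisfies `|||v||| = 0` (equivalently `a(v,v) = 0`), then all three components
of `v` vanish identically (on the respective elements and edges). -/
theorem statement13 (k : ℕ) (hk : 3 ≤ k) (N : ℕ) (hN : 4 ≤ N) (hN4 : 4 ∣ N)
    (ε : ℝ) (hε0 : 0 < ε) (hε1 : ε < 1) (hlam : shLam k N ε ≤ 1 / 4)
    (v : WGFun) (hv : MemVN0 k N v)
    (D G1 G2 : ℕ → ℕ → ℝ → ℝ → ℝ)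
    (hD : IsWeakLap k N (shPt k N ε) v D)
    (hG : IsWeakGrad k N (shPt k N ε) v G1 G2)
    (hzero : aForm N (shPt k N ε) ε (shH k N ε) (shHc k N ε) v v D D G1 G2 G1 G2 = 0) :
    (∀ i < N, ∀ j < N, ∀ x ∈ Set.Icc (shPt k N ε i) (shPt k N ε (i+1)),
      ∀ y ∈ Set.Icc (shPt k N ε j) (shPt k N ε (j+1)), v.v0 i j x y = 0) ∧
    (∀ i < N, ∀ j ≤ N, ∀ x ∈ Set.Icc (shPt k N ε i) (shPt k N ε (i+1)),
      v.vbH i j x = 0 ∧ v.vgH1 i j x = 0 ∧ v.vgH2 i j x = 0) ∧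
    (∀ i ≤ N, ∀ j < N, ∀ y ∈ Set.Icc (shPt k N ε j) (shPt k N ε (j+1)),
      v.vbV i j y = 0 ∧ v.vgV1 i j y = 0 ∧ v.vgV2 i j y = 0) := by
  classical
  obtain ⟨⟨hQ0, hPbH, hPbV⟩, hbdH, hbdV⟩ := hv
  set X : ℕ → ℝ := shPt k N ε with hXdef
  have hN1 : (1:ℝ) < (N:ℝ) := by exact_mod_cast (by omega : 1 < N)
  have hNR : (0:ℝ) < (N:ℝ) := by linarith
  have hlam0 : 0 < shLam k N ε := by
    have hlog : 0 < Real.log N := Real.log_pos hN1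
    have hk1 : (0:ℝ) < (k:ℝ) + 1 := by positivity
    unfold shLam
    exact mul_pos (mul_pos hk1 hε0) hlog
  have hlt : ∀ i, i < N → X i < X (i+1) := fun i hi => meshPt_lt hN hN4 hlam0 hlam i hi
  have hh : 0 < shH k N ε := by
    unfold shH
    exact div_pos (by linarith) hNR
  have hHc : 0 < shHc k N ε := by
    unfold shHc
    exact div_pos (by linarith [hlam]) hNR
  have hc1 : 0 < ε ^ 2 * (shH k N ε)⁻¹ := by positivity
  have hc2 : 0 < ε ^ 2 * ((shH k N ε) ^ 2)⁻¹ * (shHc k N ε)⁻¹ + (shHc k N ε)⁻¹ := by positivity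
  have hsPnn : ∀ i, i < N → ∀ j, j < N → 0 ≤ sPair X v v i j := by
    intro i hi j hj
    unfold sPair
    refine add_nonneg (add_nonneg (add_nonneg ?_ ?_) ?_) ?_
    · exact intervalIntegral.integral_nonneg (hlt i hi).le fun x _ => mul_self_nonneg _
    · exact intervalIntegral.integral_nonneg (hlt i hi).le fun x _ => mul_self_nonneg _
    · exact intervalIntegral.integral_nonneg (hlt j hj).le fun y _ => mul_self_nonneg _
    · exact intervalIntegral.integral_nonneg (hlt j hj).le fun y _ => mul_self_nonneg _
  have hsPGnn : ∀ i, i < N → ∀ j, j < N → 0 ≤ sPairG X v v i j := by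
    intro i hi j hj
    unfold sPairG
    refine add_nonneg (add_nonneg (add_nonneg ?_ ?_) ?_) ?_
    · exact intervalIntegral.integral_nonneg (hlt i hi).le fun x _ =>
        add_nonneg (mul_self_nonneg _) (mul_self_nonneg _)
    · exact intervalIntegral.integral_nonneg (hlt i hi).le fun x _ =>
        add_nonneg (mul_self_nonneg _) (mul_self_nonneg _)
    · exact intervalIntegral.integral_nonneg (hlt j hj).le fun y _ =>
        add_nonneg (mul_self_nonneg _) (mul_self_nonneg _)
    · exact intervalIntegral.integral_nonneg (hlt j hj).le fun y _ =>
        add_nonneg (mul_self_nonneg _) (mul_self_nonneg _)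
  have hzero' : ∀ i, i < N → ∀ j, j < N →
      ipT (X i) (X (i+1)) (X j) (X (j+1)) (G1 i j) (G1 i j) = 0 ∧
      ipT (X i) (X (i+1)) (X j) (X (j+1)) (G2 i j) (G2 i j) = 0 ∧
      sPairG X v v i j = 0 ∧ sPair X v v i j = 0 := by
    have hsum := hzero
    unfold aForm stab at hsum
    simp only [← Finset.sum_add_distrib] at hsum
    have hnnterm : ∀ a ∈ Finset.range N, ∀ b ∈ Finset.range N,
        0 ≤ (ε ^ 2 * ipT (X a) (X (a+1)) (X b) (X (b+1)) (D a b) (D a b)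
            + ipT (X a) (X (a+1)) (X b) (X (b+1)) (G1 a b) (G1 a b)
            + ipT (X a) (X (a+1)) (X b) (X (b+1)) (G2 a b) (G2 a b)
            + (ε ^ 2 * (shH k N ε)⁻¹ * sPairG X v v a b
              + (ε ^ 2 * ((shH k N ε) ^ 2)⁻¹ * (shHc k N ε)⁻¹ + (shHc k N ε)⁻¹)
                * sPair X v v a b)) := by
      intro a ha b hb
      have ha' := Finset.mem_range.mp ha
      have hb' := Finset.mem_range.mp hb
      have n1 := ipT_self_nonneg (hlt a ha').le (hlt b hb').le (D a b)
      have n2 := ipT_self_nonneg (hlt a ha').le (hlt b hb').le (G1 a b)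
      have n3 := ipT_self_nonneg (hlt a ha').le (hlt b hb').le (G2 a b)
      have n4 := hsPGnn a ha' b hb'
      have n5 := hsPnn a ha' b hb'
      have m1 : 0 ≤ ε ^ 2 * ipT (X a) (X (a+1)) (X b) (X (b+1)) (D a b) (D a b) :=
        mul_nonneg (by positivity) n1
      have m4 := mul_nonneg hc1.le n4
      have m5 := mul_nonneg hc2.le n5
      linarith
    intro i hi j hj
    have hi' : i ∈ Finset.range N := Finset.mem_range.mpr hi
    have hj' : j ∈ Finset.range N := Finset.mem_range.mpr hj
    have hrow := (Finset.sum_eq_zero_iff_of_nonneg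
      (fun a ha => Finset.sum_nonneg fun b hb => hnnterm a ha b hb)).mp hsum i hi'
    have hterm := (Finset.sum_eq_zero_iff_of_nonneg (hnnterm i hi')).mp hrow j hj'
    have n1 := ipT_self_nonneg (hlt i hi).le (hlt j hj).le (D i j)
    have n2 := ipT_self_nonneg (hlt i hi).le (hlt j hj).le (G1 i j)
    have n3 := ipT_self_nonneg (hlt i hi).le (hlt j hj).le (G2 i j)
    have n4 := hsPGnn i hi j hj
    have n5 := hsPnn i hi j hj
    have m1 : 0 ≤ ε ^ 2 * ipT (X i) (X (i+1)) (X j) (X (j+1)) (D i j) (D i j) :=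
      mul_nonneg (by positivity) n1
    have m4 := mul_nonneg hc1.le n4
    have m5 := mul_nonneg hc2.le n5
    have z4 : ε ^ 2 * (shH k N ε)⁻¹ * sPairG X v v i j = 0 := by linarith
    have z5 : (ε ^ 2 * ((shH k N ε) ^ 2)⁻¹ * (shHc k N ε)⁻¹ + (shHc k N ε)⁻¹)
        * sPair X v v i j = 0 := by linarith
    refine ⟨by linarith, by linarith, ?_, ?_⟩
    · rcases mul_eq_zero.mp z4 with h' | h'
      · exact absurd h' hc1.ne'
      · exact h'
    · rcases mul_eq_zero.mp z5 with h' | h'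
      · exact absurd h' hc2.ne'
      · exact h'
  have hall : ∀ i, i < N → ∀ j, j < N →
      ((∀ x ∈ Set.Icc (X i) (X (i+1)), ∀ y ∈ Set.Icc (X j) (X (j+1)),
          v.v0 i j x y = v.v0 i j (X i) (X j)
            ∧ pd1 (v.v0 i j) x y = 0 ∧ pd2 (v.v0 i j) x y = 0)
        ∧ (∀ x ∈ Set.Icc (X i) (X (i+1)),
            v.v0 i j x (X j) = v.vbH i j x ∧ v.v0 i j x (X (j+1)) = v.vbH i (j+1) x
            ∧ pd1 (v.v0 i j) x (X j) = v.vgH1 i j x ∧ pd2 (v.v0 i j) x (X j) = v.vgH2 i j x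
            ∧ pd1 (v.v0 i j) x (X (j+1)) = v.vgH1 i (j+1) x
            ∧ pd2 (v.v0 i j) x (X (j+1)) = v.vgH2 i (j+1) x)
        ∧ (∀ y ∈ Set.Icc (X j) (X (j+1)),
            v.v0 i j (X i) y = v.vbV i j y ∧ v.v0 i j (X (i+1)) y = v.vbV (i+1) j y
            ∧ pd1 (v.v0 i j) (X i) y = v.vgV1 i j y ∧ pd2 (v.v0 i j) (X i) y = v.vgV2 i j y
            ∧ pd1 (v.v0 i j) (X (i+1)) y = v.vgV1 (i+1) j y
            ∧ pd2 (v.v0 i j) (X (i+1)) y = v.vgV2 (i+1) j y)) := by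
    intro i hi j hj
    obtain ⟨hzG1, hzG2, hzPG, hzP⟩ := hzero' i hi j hj
    have hxi := hlt i hi
    have hyj := hlt j hj
    have hsf : SF k (v.v0 i j) := (hQ0 i hi j hj).sf
    have hbB : IsPk k (v.vbH i j) := (hPbH i hi j hj.le).1
    have hbT : IsPk k (v.vbH i (j+1)) := (hPbH i hi (j+1) hj).1
    have hbL : IsPk k (v.vbV i j) := (hPbV i hi.le j hj).1
    have hbR : IsPk k (v.vbV (i+1) j) := (hPbV (i+1) hi j hj).1
    have hgB1 : IsPk k (v.vgH1 i j) := (hPbH i hi j hj.le).2.1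
    have hgB2 : IsPk k (v.vgH2 i j) := (hPbH i hi j hj.le).2.2
    have hgT1 : IsPk k (v.vgH1 i (j+1)) := (hPbH i hi (j+1) hj).2.1
    have hgT2 : IsPk k (v.vgH2 i (j+1)) := (hPbH i hi (j+1) hj).2.2
    have hgL1 : IsPk k (v.vgV1 i j) := (hPbV i hi.le j hj).2.1
    have hgL2 : IsPk k (v.vgV2 i j) := (hPbV i hi.le j hj).2.2
    have hgR1 : IsPk k (v.vgV1 (i+1) j) := (hPbV (i+1) hi j hj).2.1
    have hgR2 : IsPk k (v.vgV2 (i+1) j) := (hPbV (i+1) hi j hj).2.2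
    unfold sPair at hzP
    obtain ⟨zB, zT, zL, zR⟩ := four_zero
      (intervalIntegral.integral_nonneg hxi.le fun _ _ => mul_self_nonneg _)
      (intervalIntegral.integral_nonneg hxi.le fun _ _ => mul_self_nonneg _)
      (intervalIntegral.integral_nonneg hyj.le fun _ _ => mul_self_nonneg _)
      (intervalIntegral.integral_nonneg hyj.le fun _ _ => mul_self_nonneg _) hzP
    have eB : ∀ x ∈ Set.Icc (X i) (X (i+1)), v.v0 i j x (X j) = v.vbH i j x := fun x hx =>
      sub_eq_zero.mp (edge_sq_zero (f := fun x => v.v0 i j x (X j) - v.vbH i j x)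
        ((hsf.cont1 (X j)).sub hbB.cont) hxi zB x hx)
    have eT : ∀ x ∈ Set.Icc (X i) (X (i+1)), v.v0 i j x (X (j+1)) = v.vbH i (j+1) x :=
      fun x hx =>
      sub_eq_zero.mp (edge_sq_zero (f := fun x => v.v0 i j x (X (j+1)) - v.vbH i (j+1) x)
        ((hsf.cont1 (X (j+1))).sub hbT.cont) hxi zT x hx)
    have eL : ∀ y ∈ Set.Icc (X j) (X (j+1)), v.v0 i j (X i) y = v.vbV i j y := fun y hy =>
      sub_eq_zero.mp (edge_sq_zero (f := fun y => v.v0 i j (X i) y - v.vbV i j y)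
        ((hsf.cont2 (X i)).sub hbL.cont) hyj zL y hy)
    have eR : ∀ y ∈ Set.Icc (X j) (X (j+1)), v.v0 i j (X (i+1)) y = v.vbV (i+1) j y :=
      fun y hy =>
      sub_eq_zero.mp (edge_sq_zero (f := fun y => v.v0 i j (X (i+1)) y - v.vbV (i+1) j y)
        ((hsf.cont2 (X (i+1))).sub hbR.cont) hyj zR y hy)
    unfold sPairG at hzPG
    obtain ⟨gB, gT, gL, gR⟩ := four_zero
      (intervalIntegral.integral_nonneg hxi.le fun _ _ =>
        add_nonneg (mul_self_nonneg _) (mul_self_nonneg _))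
      (intervalIntegral.integral_nonneg hxi.le fun _ _ =>
        add_nonneg (mul_self_nonneg _) (mul_self_nonneg _))
      (intervalIntegral.integral_nonneg hyj.le fun _ _ =>
        add_nonneg (mul_self_nonneg _) (mul_self_nonneg _))
      (intervalIntegral.integral_nonneg hyj.le fun _ _ =>
        add_nonneg (mul_self_nonneg _) (mul_self_nonneg _)) hzPG
    have eGB : ∀ x ∈ Set.Icc (X i) (X (i+1)),
        pd1 (v.v0 i j) x (X j) = v.vgH1 i j x ∧ pd2 (v.v0 i j) x (X j) = v.vgH2 i j x := by
      intro x hx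
      have h' := edge_sq2_zero (f := fun x => pd1 (v.v0 i j) x (X j) - v.vgH1 i j x)
        (g := fun x => pd2 (v.v0 i j) x (X j) - v.vgH2 i j x)
        ((hsf.pd1_sf.cont1 (X j)).sub hgB1.cont) ((hsf.pd2_sf.cont1 (X j)).sub hgB2.cont)
        hxi gB x hx
      exact ⟨sub_eq_zero.mp h'.1, sub_eq_zero.mp h'.2⟩
    have eGT : ∀ x ∈ Set.Icc (X i) (X (i+1)),
        pd1 (v.v0 i j) x (X (j+1)) = v.vgH1 i (j+1) x
          ∧ pd2 (v.v0 i j) x (X (j+1)) = v.vgH2 i (j+1) x := by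
      intro x hx
      have h' := edge_sq2_zero (f := fun x => pd1 (v.v0 i j) x (X (j+1)) - v.vgH1 i (j+1) x)
        (g := fun x => pd2 (v.v0 i j) x (X (j+1)) - v.vgH2 i (j+1) x)
        ((hsf.pd1_sf.cont1 (X (j+1))).sub hgT1.cont)
        ((hsf.pd2_sf.cont1 (X (j+1))).sub hgT2.cont) hxi gT x hx
      exact ⟨sub_eq_zero.mp h'.1, sub_eq_zero.mp h'.2⟩
    have eGL : ∀ y ∈ Set.Icc (X j) (X (j+1)),
        pd1 (v.v0 i j) (X i) y = v.vgV1 i j y ∧ pd2 (v.v0 i j) (X i) y = v.vgV2 i j y := by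
      intro y hy
      have h' := edge_sq2_zero (f := fun y => pd1 (v.v0 i j) (X i) y - v.vgV1 i j y)
        (g := fun y => pd2 (v.v0 i j) (X i) y - v.vgV2 i j y)
        ((hsf.pd1_sf.cont2 (X i)).sub hgL1.cont) ((hsf.pd2_sf.cont2 (X i)).sub hgL2.cont)
        hyj gL y hy
      exact ⟨sub_eq_zero.mp h'.1, sub_eq_zero.mp h'.2⟩
    have eGR : ∀ y ∈ Set.Icc (X j) (X (j+1)),
        pd1 (v.v0 i j) (X (i+1)) y = v.vgV1 (i+1) j y
          ∧ pd2 (v.v0 i j) (X (i+1)) y = v.vgV2 (i+1) j y := by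
      intro y hy
      have h' := edge_sq2_zero (f := fun y => pd1 (v.v0 i j) (X (i+1)) y - v.vgV1 (i+1) j y)
        (g := fun y => pd2 (v.v0 i j) (X (i+1)) y - v.vgV2 (i+1) j y)
        ((hsf.pd1_sf.cont2 (X (i+1))).sub hgR1.cont)
        ((hsf.pd2_sf.cont2 (X (i+1))).sub hgR2.cont) hyj gR y hy
      exact ⟨sub_eq_zero.mp h'.1, sub_eq_zero.mp h'.2⟩
    obtain ⟨hQG1, hQG2, hfor⟩ := hG i hi j hj
    have hG1rect := zero2 hQG1.sf.cont hxi hyj hzG1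
    have hG2rect := zero2 hQG2.sf.cont hxi hyj hzG2
    have hid0 : ∀ q1 q2 : ℝ → ℝ → ℝ, IsQk k q1 → IsQk k q2 →
        0 = -(ipT (X i) (X (i+1)) (X j) (X (j+1)) (v.v0 i j)
              (fun x y => pd1 q1 x y + pd2 q2 x y))
          + ((∫ x in (X i)..(X (i+1)), v.vbH i j x * (-(q2 x (X j))))
            + (∫ x in (X i)..(X (i+1)), v.vbH i (j+1) x * q2 x (X (j+1)))
            + (∫ y in (X j)..(X (j+1)), v.vbV i j y * (-(q1 (X i) y)))
            + (∫ y in (X j)..(X (j+1)), v.vbV (i+1) j y * q1 (X (i+1)) y)) := by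
      intro q1 q2 hq1 hq2
      have h' := hfor q1 q2 hq1 hq2
      rw [ipT_zero_left hxi.le hyj.le q1 hG1rect,
        ipT_zero_left hxi.le hyj.le q2 hG2rect] at h'
      linarith [h']
    have hcz := elemZero hxi hyj hsf eB eT eL eR hid0
    refine ⟨fun x hx y hy => hcz x hx y hy, ?_, ?_⟩
    · intro x hx
      exact ⟨eB x hx, eT x hx, (eGB x hx).1, (eGB x hx).2, (eGT x hx).1, (eGT x hx).2⟩
    · intro y hy
      exact ⟨eL y hy, eR y hy, (eGL y hy).1, (eGL y hy).2, (eGR y hy).1, (eGR y hy).2⟩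
  have hbase : ∀ i, i < N → ∀ j, j < N → v.v0 i j (X i) (X j) = 0 := by
    intro i
    induction i with
    | zero =>
      intro _ j hj
      have hXj : X j ∈ Set.Icc (X j) (X (j+1)) := ⟨le_refl _, (hlt j hj).le⟩
      rw [((hall 0 (by omega) j hj).2.2 (X j) hXj).1]
      exact (hbdV j hj).1 (X j)
    | succ n ih =>
      intro hn1 j hj
      have hn : n < N := by omega
      have hXj : X j ∈ Set.Icc (X j) (X (j+1)) := ⟨le_refl _, (hlt j hj).le⟩
      have e1 := ((hall (n+1) hn1 j hj).2.2 (X j) hXj).1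
      have e2 := ((hall n hn j hj).2.2 (X j) hXj).2.1
      have e3 := ((hall n hn j hj).1 (X (n+1)) ⟨(hlt n hn).le, le_refl _⟩ (X j) hXj).1
      rw [e1, ← e2, e3]
      exact ih hn j hj
  refine ⟨?_, ?_, ?_⟩
  · intro i hi j hj x hx y hy
    rw [((hall i hi j hj).1 x hx y hy).1]
    exact hbase i hi j hj
  · intro i hi j hj x hx
    by_cases hjN : j < N
    · have hXj : X j ∈ Set.Icc (X j) (X (j+1)) := ⟨le_refl _, (hlt j hjN).le⟩
      have hE := (hall i hi j hjN).2.1 x hx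
      have hK := (hall i hi j hjN).1 x hx (X j) hXj
      refine ⟨?_, ?_, ?_⟩
      · rw [← hE.1, hK.1]
        exact hbase i hi j hjN
      · rw [← hE.2.2.1]
        exact hK.2.1
      · rw [← hE.2.2.2.1]
        exact hK.2.2
    · have hjN' : j = N := by omega
      have hm : N - 1 < N := by omega
      have hm1 : N - 1 + 1 = N := by omega
      have hXm : X (N-1+1) ∈ Set.Icc (X (N-1)) (X (N-1+1)) :=
        ⟨(hlt (N-1) hm).le, le_refl _⟩
      have hE := (hall i hi (N-1) hm).2.1 x hx
      have hK := (hall i hi (N-1) hm).1 x hx (X (N-1+1)) hXm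
      refine ⟨?_, ?_, ?_⟩
      · rw [hjN', ← hm1, ← hE.2.1, hK.1]
        exact hbase i hi (N-1) hm
      · rw [hjN', ← hm1, ← hE.2.2.2.2.1]
        exact hK.2.1
      · rw [hjN', ← hm1, ← hE.2.2.2.2.2]
        exact hK.2.2
  · intro i hi j hj y hy
    by_cases hiN : i < N
    · have hXi : X i ∈ Set.Icc (X i) (X (i+1)) := ⟨le_refl _, (hlt i hiN).le⟩
      have hE := (hall i hiN j hj).2.2 y hy
      have hK := (hall i hiN j hj).1 (X i) hXi y hy
      refine ⟨?_, ?_, ?_⟩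
      · rw [← hE.1, hK.1]
        exact hbase i hiN j hj
      · rw [← hE.2.2.1]
        exact hK.2.1
      · rw [← hE.2.2.2.1]
        exact hK.2.2
    · have hiN' : i = N := by omega
      have hm : N - 1 < N := by omega
      have hm1 : N - 1 + 1 = N := by omega
      have hXm : X (N-1+1) ∈ Set.Icc (X (N-1)) (X (N-1+1)) :=
        ⟨(hlt (N-1) hm).le, le_refl _⟩
      have hE := (hall (N-1) hm j hj).2.2 y hy
      have hK := (hall (N-1) hm j hj).1 (X (N-1+1)) hXm y hy
      refine ⟨?_, ?_, ?_⟩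
      · rw [hiN', ← hm1, ← hE.2.1, hK.1]
        exact hbase (N-1) hm j hj
      · rw [hiN', ← hm1, ← hE.2.2.2.2.1]
        exact hK.2.1
      · rw [hiN', ← hm1, ← hE.2.2.2.2.2]
        exact hK.2.2
end
end
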